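/- arXiv:1809.10050 — 6 statements merged into one kernel-verified Lean document; each statement's English description precedes it below -/
import Mathlib

section
/- Let $X \subseteq \mathbb{R}^n$ be nonempty, compact and convex, $f: \mathbb{R}^n \to \mathbb{R}$ convex, and $h: \mathbb{R}^n \to \mathbb{R}$ strongly convex with parameter $\mu_h > 0$. For $\lambda > 0$, let $x_\lambda^*$ denote the unique minimizer of $f + \lambda h$ over $X$. Then for any $\lambda_1, \lambda_2 > 0$, $\|x_{\lambda_2}^* - x_{\lambda_1}^*\| \leq \frac{C_h}{\mu_h} |1 - \lambda_1/\lambda_2|$, where $C_h$ is a bound on the norms of subgradients of $h$ over $X$. -/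
open Filter Finset Real Set
open scoped RealInnerProductSpace Topology BigOperators

noncomputable section

abbrev Euc (n : ℕ) := EuclideanSpace ℝ (Fin n)

/-- `g` is a subgradient of `f` at `x`. -/
def IsSubgradAt {n : ℕ} (f : Euc n → ℝ) (x g : Euc n) : Prop :=
  ∀ y, f x + (inner ℝ g (y - x) : ℝ) ≤ f y

/-- `y` is the Euclidean projection of `p` onto `X`. -/
def IsProjOn {n : ℕ} (X : Set (Euc n)) (p y : Euc n) : Prop :=
  y ∈ X ∧ ∀ z ∈ X, ‖p - y‖ ≤ ‖p - z‖

/-- affine limit lemma -/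
lemma aux_le_of_forall_affine {a b c : ℝ} (hb : 0 ≤ b)
    (H : ∀ t : ℝ, 0 < t → t ≤ 1 → c ≤ a + t * b) : c ≤ a := by
  by_contra hlt
  push_neg at hlt
  rcases eq_or_lt_of_le hb with hb0 | hb'
  · have := H 1 one_pos le_rfl
    nlinarith
  · have ht0 : 0 < min 1 ((c - a) / (2 * b)) :=
      lt_min one_pos (div_pos (by linarith) (by linarith))
    have := H _ ht0 (min_le_left _ _)
    have htb : min 1 ((c - a) / (2 * b)) * b ≤ (c - a) / 2 := by
      calc min 1 ((c - a) / (2 * b)) * b ≤ ((c - a) / (2 * b)) * b := by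
            gcongr; exact min_le_right _ _
        _ = (c - a) / 2 := by field_simp
    linarith

/-- Convex functions on Euclidean space have subgradients everywhere. -/
lemma exists_subgrad {n : ℕ} {h : Euc n → ℝ} (hc : ConvexOn ℝ Set.univ h) (x : Euc n) :
    ∃ g, IsSubgradAt h x g := by
  have hcont : Continuous h := by
    have := hc.continuousOn isOpen_univ
    exact continuousOn_univ.1 this
  set S : Set (Euc n × ℝ) := {p | h p.1 < p.2} with hSdef
  have hSopen : IsOpen S := isOpen_lt (hcont.comp continuous_fst) continuous_snd
  have hSconv : Convex ℝ S := by
    intro p hp q hq a b ha hb hab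
    simp only [hSdef, Set.mem_setOf_eq] at hp hq ⊢
    have h1 : (a • p + b • q).1 = a • p.1 + b • q.1 := by simp
    have h2 : (a • p + b • q).2 = a * p.2 + b * q.2 := by simp [smul_eq_mul]
    rw [h1, h2]
    have H := hc.2 (Set.mem_univ p.1) (Set.mem_univ q.1) ha hb hab
    simp only [smul_eq_mul] at H
    rcases eq_or_lt_of_le ha with ha0 | ha'
    · have hb1 : b = 1 := by linarith
      subst hb1
      rw [← ha0] at H ⊢
      linarith
    · have l1 : a * p.2 > a * h p.1 := by exact mul_lt_mul_of_pos_left hp ha'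
      have l2 : b * h q.1 ≤ b * q.2 := mul_le_mul_of_nonneg_left hq.le hb
      linarith
  have hxS : ((x, h x) : Euc n × ℝ) ∉ S := by simp [hSdef]
  obtain ⟨φ, hφ⟩ := geometric_hahn_banach_open_point hSconv hSopen hxS
  set c : ℝ := φ (0, 1) with hcdef
  have hsplit : ∀ (y : Euc n) (t : ℝ), φ (y, t) = φ (y, 0) + t * c := by
    intro y t
    have : ((y, t) : Euc n × ℝ) = (y, 0) + t • ((0 : Euc n), (1 : ℝ)) := by
      simp [Prod.ext_iff]
    rw [this, map_add, map_smul, smul_eq_mul, hcdef]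
  have hc_neg : c < 0 := by
    have := hφ (x, h x + 1) (by simp [hSdef])
    rw [hsplit x (h x + 1), hsplit x (h x)] at this
    linarith
  have hc0 : c ≠ 0 := ne_of_lt hc_neg
  have main : ∀ y, φ (y, 0) + h y * c ≤ φ (x, 0) + h x * c := by
    intro y
    by_contra hlt
    push_neg at hlt
    set gap : ℝ := φ (y, 0) + h y * c - (φ (x, 0) + h x * c) with hgap
    have hgap_pos : 0 < gap := by linarith
    set ε : ℝ := gap / (-c) with hε
    have hεpos : 0 < ε := div_pos hgap_pos (by linarith)
    have hmem : ((y, h y + ε) : Euc n × ℝ) ∈ S := by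
      simp only [hSdef, Set.mem_setOf_eq]; linarith
    have := hφ _ hmem
    rw [hsplit y (h y + ε), hsplit x (h x)] at this
    have hεc : ε * c = -gap := by
      rw [hε]; field_simp
    nlinarith [hεc]
  refine ⟨(InnerProductSpace.toDual ℝ (Euc n)).symm
    ((-c⁻¹) • (φ.comp (ContinuousLinearMap.inl ℝ (Euc n) ℝ))), ?_⟩
  intro y
  have hrepr : (inner ℝ ((InnerProductSpace.toDual ℝ (Euc n)).symm
      ((-c⁻¹) • (φ.comp (ContinuousLinearMap.inl ℝ (Euc n) ℝ)))) (y - x) : ℝ)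
      = -c⁻¹ * φ (y - x, 0) := by
    rw [InnerProductSpace.toDual_symm_apply]
    simp [ContinuousLinearMap.smul_apply]
  rw [hrepr]
  have hsub : φ (y - x, 0) = φ (y, 0) - φ (x, 0) := by
    have : ((y - x, 0) : Euc n × ℝ) = (y, 0) - (x, 0) := by simp [Prod.ext_iff]
    rw [this, map_sub]
  rw [hsub]
  have hm := main y
  have hinv : c * c⁻¹ = 1 := mul_inv_cancel₀ hc0
  have hcinv_neg : c⁻¹ < 0 := inv_lt_zero.2 hc_neg
  -- goal: h x + -c⁻¹ * (φ (y,0) - φ (x,0)) ≤ h y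
  have h2 : (-c⁻¹) * (φ (y, 0) + h y * c) ≤ (-c⁻¹) * (φ (x, 0) + h x * c) :=
    mul_le_mul_of_nonneg_left hm (by linarith)
  have e1 : (-c⁻¹) * (φ (y, 0) + h y * c) = (-c⁻¹) * φ (y, 0) - h y * (c * c⁻¹) := by ring
  have e2 : (-c⁻¹) * (φ (x, 0) + h x * c) = (-c⁻¹) * φ (x, 0) - h x * (c * c⁻¹) := by ring
  rw [e1, e2, hinv] at h2
  linarith

/-- At a constrained minimizer of `f + l*h`, the infimum of difference quotients of `h`
towards another point of `X` is squeezed. -/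
lemma key_aux {n : ℕ} (X : Set (Euc n)) (hXcv : Convex ℝ X)
    (f h : Euc n → ℝ) (hf : ConvexOn ℝ Set.univ f)
    (μ : ℝ) (hμ : 0 < μ) (hh : StrongConvexOn Set.univ μ h)
    (l : ℝ) (hl : 0 < l) (x z : Euc n) (hx : x ∈ X) (hz : z ∈ X)
    (hmin : ∀ y ∈ X, f x + l * h x ≤ f y + l * h y)
    (v : Euc n) (hv : IsSubgradAt h x v) :
    ∃ A : ℝ, (f x - f z) / l ≤ A ∧ -(‖v‖ * ‖z - x‖) ≤ A ∧
      A ≤ h z - h x - μ / 2 * ‖z - x‖ ^ 2 := by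
  set slope : ℝ → ℝ := fun t => (h (x + t • (z - x)) - h x) / t with hslope
  set S : Set ℝ := slope '' Set.Ioc (0 : ℝ) 1 with hSdef
  have hcombo : ∀ t : ℝ, (1 - t) • x + t • z = x + t • (z - x) := by
    intro t
    rw [smul_sub, sub_smul, one_smul]
    abel
  have hlow : ∀ t ∈ Set.Ioc (0 : ℝ) 1, (inner ℝ v (z - x) : ℝ) ≤ slope t := by
    intro t ht
    have h1 := hv (x + t • (z - x))
    rw [add_sub_cancel_left, real_inner_smul_right] at h1
    rw [hslope]
    rw [le_div_iff₀ ht.1]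
    linarith
  have hne : S.Nonempty := ⟨slope 1, 1, ⟨zero_lt_one, le_rfl⟩, rfl⟩
  have hbdd : BddBelow S := by
    refine ⟨(inner ℝ v (z - x) : ℝ), ?_⟩
    rintro _ ⟨t, ht, rfl⟩
    exact hlow t ht
  refine ⟨sInf S, ?_, ?_, ?_⟩
  · apply le_csInf hne
    rintro _ ⟨t, ht, rfl⟩
    have hyX : (1 - t) • x + t • z ∈ X :=
      hXcv hx hz (by linarith [ht.2]) ht.1.le (by ring)
    have hm := hmin _ hyX
    have hfy := hf.2 (Set.mem_univ x) (Set.mem_univ z)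
      (by linarith [ht.2] : (0:ℝ) ≤ 1 - t) ht.1.le (by ring)
    simp only [smul_eq_mul] at hfy
    rw [hslope]
    simp only [← hcombo t]
    rw [div_le_div_iff₀ hl ht.1]
    nlinarith
  · apply le_csInf hne
    rintro _ ⟨t, ht, rfl⟩
    have h1 := hlow t ht
    have h2 := abs_real_inner_le_norm v (z - x)
    have h3 := neg_abs_le (inner ℝ v (z - x) : ℝ)
    linarith
  · apply aux_le_of_forall_affine (b := μ / 2 * ‖z - x‖ ^ 2) (by positivity)
    intro t ht0 ht1
    have hAle : sInf S ≤ slope t := csInf_le hbdd ⟨t, ⟨ht0, ht1⟩, rfl⟩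
    have hsc := hh.2 (Set.mem_univ x) (Set.mem_univ z)
      (by linarith : (0:ℝ) ≤ 1 - t) ht0.le (by ring)
    rw [hcombo t] at hsc
    simp only [smul_eq_mul, norm_sub_rev x z] at hsc
    have hst : slope t ≤ h z - h x - (1 - t) * (μ / 2 * ‖z - x‖ ^ 2) := by
      rw [hslope]
      rw [div_le_iff₀ ht0]
      nlinarith
    nlinarith

/-- bound on the drift of regularized minimizers. -/
theorem regularized_minimizer_drift {n : ℕ} (X : Set (Euc n))
    (hXne : X.Nonempty) (hXcp : IsCompact X) (hXcv : Convex ℝ X)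
    (f h : Euc n → ℝ) (hf : ConvexOn ℝ Set.univ f)
    (μ Ch : ℝ) (hμ : 0 < μ) (hh : StrongConvexOn Set.univ μ h)
    (hCh : ∀ x ∈ X, ∀ g, IsSubgradAt h x g → ‖g‖ ≤ Ch)
    (xs : ℝ → Euc n)
    (hxs : ∀ l, 0 < l → xs l ∈ X ∧ ∀ y ∈ X, f (xs l) + l * h (xs l) ≤ f y + l * h y)
    (l1 l2 : ℝ) (hl1 : 0 < l1) (hl2 : 0 < l2) :
    ‖xs l2 - xs l1‖ ≤ Ch / μ * |1 - l1 / l2| := by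
  obtain ⟨hx1, hmin1⟩ := hxs l1 hl1
  obtain ⟨hx2, hmin2⟩ := hxs l2 hl2
  set x1 := xs l1 with hx1def
  set x2 := xs l2 with hx2def
  have hconv_h : ConvexOn ℝ Set.univ h := hh.convexOn fun r => by positivity
  obtain ⟨v1, hv1⟩ := exists_subgrad hconv_h x1
  obtain ⟨v2, hv2⟩ := exists_subgrad hconv_h x2
  have hv1n : ‖v1‖ ≤ Ch := hCh x1 hx1 v1 hv1
  have hv2n : ‖v2‖ ≤ Ch := hCh x2 hx2 v2 hv2
  have hCh0 : (0:ℝ) ≤ Ch := (norm_nonneg v1).trans hv1n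
  obtain ⟨A, hA1, hA2, hA3⟩ :=
    key_aux X hXcv f h hf μ hμ hh l1 hl1 x1 x2 hx1 hx2 hmin1 v1 hv1
  obtain ⟨B, hB1, _hB2, hB3⟩ :=
    key_aux X hXcv f h hf μ hμ hh l2 hl2 x2 x1 hx2 hx1 hmin2 v2 hv2
  set D : ℝ := ‖x2 - x1‖ with hDdef
  rw [norm_sub_rev x1 x2] at hB3
  have hD0 : (0:ℝ) ≤ D := norm_nonneg _
  -- h x2 - h x1 ≤ Ch * D
  have hhd : h x2 - h x1 ≤ Ch * D := by
    have h1 := hv2 x1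
    have h2 := abs_real_inner_le_norm v2 (x1 - x2)
    have h3 := neg_abs_le (inner ℝ v2 (x1 - x2) : ℝ)
    have h4 : ‖x1 - x2‖ = D := norm_sub_rev x1 x2
    rw [h4] at h2
    linarith [mul_le_mul_of_nonneg_right hv2n hD0]
  have key1 : 0 ≤ l1 * A + l2 * B := by
    rw [div_le_iff₀ hl1] at hA1
    rw [div_le_iff₀ hl2] at hB1
    linarith
  have key2 : A + B ≤ -(μ * D ^ 2) := by linarith [hA3, hB3]
  have key3 : l2 * μ * D ^ 2 ≤ (l1 - l2) * A := by
    have h5 := mul_le_mul_of_nonneg_left key2 hl2.le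
    nlinarith [key1, h5]
  have key4 : |A| ≤ Ch * D := by
    rw [abs_le]
    constructor
    · linarith [hA2, mul_le_mul_of_nonneg_right hv1n hD0]
    · linarith [hA3, hhd, mul_nonneg (by positivity : (0:ℝ) ≤ μ / 2) (sq_nonneg D)]
  have key5 : l2 * μ * D ^ 2 ≤ |l1 - l2| * (Ch * D) := by
    calc l2 * μ * D ^ 2 ≤ (l1 - l2) * A := key3
      _ ≤ |(l1 - l2) * A| := le_abs_self _
      _ = |l1 - l2| * |A| := abs_mul _ _
      _ ≤ |l1 - l2| * (Ch * D) := mul_le_mul_of_nonneg_left key4 (abs_nonneg _)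
  have habs : |1 - l1 / l2| = |l1 - l2| / l2 := by
    have he : 1 - l1 / l2 = (l2 - l1) / l2 := by field_simp
    rw [he, abs_div, abs_of_pos hl2, abs_sub_comm]
  rw [habs, div_mul_div_comm, le_div_iff₀ (by positivity : (0:ℝ) < μ * l2)]
  rcases hD0.eq_or_lt with hD | hD
  · rw [← hD]
    simp
    positivity
  · refine le_of_mul_le_mul_right ?_ hD
    nlinarith [key5]
end
end

section
/- Let $X \subseteq \mathbb{R}^n$ be nonempty, compact and convex, $f$ convex with optimal solution set $X^* = \arg\min_{x \in X} f(x)$ nonempty, and $h$ strongly convex with parameter $\mu_h > 0$ with $x_h^*$ the unique minimizer of $h$ over $X^*$. Let $\{\lambda_k\}$ be a positive sequence with $\lambda_k \to 0$, and let $x_{\lambda_k}^*$ be the unique minimizer of $f + \lambda_k h$ over $X$. Then $x_{\lambda_k}^* \to x_h^*$. -/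
open Filter Finset Real Set
open scoped RealInnerProductSpace Topology BigOperators

noncomputable section

/-- convergence of regularized minimizers to the bilevel solution. -/
theorem regularized_minimizers_converge {n : ℕ} (X : Set (Euc n))
    (hXne : X.Nonempty) (hXcp : IsCompact X) (hXcv : Convex ℝ X)
    (f h : Euc n → ℝ) (hf : ConvexOn ℝ Set.univ f)
    (μ : ℝ) (hμ : 0 < μ) (hh : StrongConvexOn Set.univ μ h)
    (hXstarne : {x ∈ X | ∀ y ∈ X, f x ≤ f y}.Nonempty)
    (xh : Euc n) (hxh : xh ∈ {x ∈ X | ∀ y ∈ X, f x ≤ f y} ∧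
      ∀ z ∈ {x ∈ X | ∀ y ∈ X, f x ≤ f y}, h xh ≤ h z)
    (lam : ℕ → ℝ) (hlampos : ∀ k, 0 < lam k) (hlam0 : Filter.Tendsto lam atTop (nhds 0))
    (xs : ℕ → Euc n)
    (hxs : ∀ k, xs k ∈ X ∧ ∀ y ∈ X, f (xs k) + lam k * h (xs k) ≤ f y + lam k * h y) :
    Filter.Tendsto xs atTop (nhds xh) := by
  obtain ⟨⟨hxhX, hxhopt⟩, hxhmin⟩ := hxh
  have hhcv : ConvexOn ℝ Set.univ h := hh.convexOn fun r => by positivity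
  have hfc : Continuous f := by
    rw [← continuousOn_univ]; simpa using hf.continuousOn isOpen_univ
  have hhc : Continuous h := by
    rw [← continuousOn_univ]; simpa using hhcv.continuousOn isOpen_univ
  -- key inequalities
  have hkey : ∀ k, h (xs k) ≤ h xh := by
    intro k
    obtain ⟨hxk, hopt⟩ := hxs k
    have h1 := hopt xh hxhX
    have h2 := hxhopt (xs k) hxk
    have := (hlampos k)
    nlinarith
  have hfkey : ∀ k, f (xs k) ≤ f xh + lam k * (h xh - h (xs k)) := by
    intro k
    obtain ⟨hxk, hopt⟩ := hxs k
    have h1 := hopt xh hxhX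
    linarith [mul_sub (lam k) (h xh) (h (xs k))]
  apply tendsto_of_subseq_tendsto
  intro ns hns
  obtain ⟨xb, hxbX, φ, hφ, hconv⟩ := hXcp.tendsto_subseq (x := fun m => xs (ns m))
    (fun m => (hxs (ns m)).1)
  refine ⟨φ, ?_⟩
  -- show xb = xh
  have hnsφ : Tendsto (fun m => ns (φ m)) atTop atTop := hns.comp hφ.tendsto_atTop
  have hlamφ : Tendsto (fun m => lam (ns (φ m))) atTop (nhds 0) := hlam0.comp hnsφ
  have hhlim : Tendsto (fun m => h (xs (ns (φ m)))) atTop (nhds (h xb)) :=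
    (hhc.continuousAt.tendsto).comp hconv
  have hflim : Tendsto (fun m => f (xs (ns (φ m)))) atTop (nhds (f xb)) :=
    (hfc.continuousAt.tendsto).comp hconv
  have hhxb : h xb ≤ h xh := le_of_tendsto hhlim (Eventually.of_forall fun m => hkey _)
  have hfxb : f xb ≤ f xh := by
    have hrhs : Tendsto (fun m => f xh + lam (ns (φ m)) * (h xh - h (xs (ns (φ m)))))
        atTop (nhds (f xh + 0 * (h xh - h xb))) :=
      tendsto_const_nhds.add (hlamφ.mul (tendsto_const_nhds.sub hhlim))
    have := le_of_tendsto_of_tendsto' hflim hrhs (fun m => hfkey _)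
    simpa using this
  have hxbstar : xb ∈ {x ∈ X | ∀ y ∈ X, f x ≤ f y} :=
    ⟨hxbX, fun y hy => hfxb.trans (hxhopt y hy)⟩
  have hxbeq : xb = xh := by
    by_contra hne
    -- consider midpoint
    set m := (2⁻¹ : ℝ) • xb + (2⁻¹ : ℝ) • xh with hm
    have hmX : m ∈ X := hXcv hxbX hxhX (by norm_num) (by norm_num) (by norm_num)
    have hmstar : m ∈ {x ∈ X | ∀ y ∈ X, f x ≤ f y} := by
      refine ⟨hmX, fun y hy => ?_⟩
      have := hf.2 (mem_univ xb) (mem_univ xh) (by norm_num : (0:ℝ) ≤ 1/2)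
        (by norm_num : (0:ℝ) ≤ 1/2) (by norm_num : (1/2 : ℝ) + 1/2 = 1)
      have h2 := hxhopt y hy
      calc f m ≤ (1/2 : ℝ) * f xb + (1/2 : ℝ) * f xh := by simpa [smul_eq_mul] using this
        _ ≤ f y := by linarith
    have hstrong := hh.2 (mem_univ xb) (mem_univ xh) (by norm_num : (0:ℝ) ≤ 1/2)
      (by norm_num : (0:ℝ) ≤ 1/2) (by norm_num : (1/2 : ℝ) + 1/2 = 1)
    have hnorm : 0 < ‖xb - xh‖ := by
      rw [norm_pos_iff]
      exact sub_ne_zero_of_ne hne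
    have hmin := hxhmin m hmstar
    have : h m ≤ (1/2 : ℝ) * h xb + (1/2 : ℝ) * h xh - (1/2 : ℝ) * (1/2 : ℝ)
        * (μ / 2 * ‖xb - xh‖ ^ 2) := by simpa [smul_eq_mul] using hstrong
    nlinarith [sq_nonneg ‖xb - xh‖, mul_pos hμ (mul_pos hnorm hnorm)]
  rw [hxbeq] at hconv
  exact hconv
end
end

section
/- Under Assumption 1 (X compact convex, $f = \sum_{i=1}^m f_i$ with each $f_i$ convex with subgradients bounded by $C_f$ on $X$, $h$ $\mu_h$-strongly convex with subgradients bounded by $C_h$ on $X$) and with $0 < \gamma_k \lambda_k \mu_h \leq 2m$, the iterates of the iteratively regularized incremental projected subgradient algorithm satisfy: $\|x_{k+1} - x_{\lambda_k}^*\|^2 \leq (1 - \frac{\gamma_k \lambda_k \mu_h}{2m})\|x_k - x_{\lambda_{k-1}}^*\|^2 + \frac{3m C_h^2}{\gamma_k \lambda_k \mu_h^3}|1 - \frac{\lambda_{k-1}}{\lambda_k}|^2 + 6m^2 \gamma_k^2 (C_f^2 + \lambda_k^2 C_h^2)$, where $x_{\lambda}^*$ is the unique minimizer of $f + \lambda h$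 over $X$. -/
open Filter Finset Real Set
open scoped RealInnerProductSpace Topology BigOperators

noncomputable section

lemma limit_aux {A B C : ℝ} (H : ∀ t ∈ Set.Ioo (0:ℝ) 1, A + (1 - t) * B ≤ C) :
    A + B ≤ C := by
  have h1 : Tendsto (fun t : ℝ => A + (1 - t) * B) (𝓝[>] 0) (𝓝 (A + (1 - 0) * B)) :=
    Tendsto.mono_left ((continuous_const.add
      ((continuous_const.sub continuous_id).mul continuous_const)).tendsto 0)
      nhdsWithin_le_nhds
  have h2 : ∀ᶠ t in 𝓝[>] (0:ℝ), A + (1 - t) * B ≤ C := by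
    filter_upwards [Ioo_mem_nhdsGT_of_mem (Set.left_mem_Ico.mpr one_pos)] with t ht
    exact H t ht
  simpa using le_of_tendsto h1 h2

lemma proj_contract {n : ℕ} {X : Set (Euc n)} (hXcv : Convex ℝ X)
    {p y z : Euc n} (hproj : IsProjOn X p y) (hz : z ∈ X) :
    ‖y - z‖ ≤ ‖p - z‖ := by
  obtain ⟨hyX, hmin⟩ := hproj
  have key : 2 * (⟪p - y, z - y⟫ : ℝ) ≤ 0 := by
    have H : ∀ t ∈ Set.Ioo (0:ℝ) 1,
        (2 * (⟪p - y, z - y⟫ : ℝ) - ‖z - y‖ ^ 2) + (1 - t) * ‖z - y‖ ^ 2 ≤ 0 := by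
      intro t ht
      have hw : (1 - t) • y + t • z ∈ X :=
        hXcv hyX hz (by linarith [ht.2]) ht.1.le (by ring)
      have h1 := hmin _ hw
      have hpw : p - ((1 - t) • y + t • z) = (p - y) - t • (z - y) := by module
      have h2 : ‖p - y‖ ^ 2 ≤ ‖(p - y) - t • (z - y)‖ ^ 2 := by
        rw [← hpw]; exact pow_le_pow_left₀ (norm_nonneg _) h1 2
      have hexp : ‖(p - y) - t • (z - y)‖ ^ 2
          = ‖p - y‖ ^ 2 - 2 * (t * (⟪p - y, z - y⟫ : ℝ)) + t ^ 2 * ‖z - y‖ ^ 2 := by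
        rw [norm_sub_sq_real, real_inner_smul_right, norm_smul, Real.norm_eq_abs,
          abs_of_pos ht.1, mul_pow]
      rw [hexp] at h2
      have h3 : t * (2 * (⟪p - y, z - y⟫ : ℝ)) ≤ t * (t * ‖z - y‖ ^ 2) := by nlinarith
      have h4 := le_of_mul_le_mul_left h3 ht.1
      linarith
    linarith [limit_aux H]
  have h5 : ‖p - z‖ ^ 2 = ‖p - y‖ ^ 2 - 2 * (⟪p - y, z - y⟫ : ℝ) + ‖z - y‖ ^ 2 := by
    rw [show p - z = (p - y) - (z - y) by abel, norm_sub_sq_real]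
  have h6 : ‖y - z‖ ^ 2 ≤ ‖p - z‖ ^ 2 := by
    rw [norm_sub_rev y z]; nlinarith [sq_nonneg ‖p - y‖]
  have h7 := Real.sqrt_le_sqrt h6
  rwa [Real.sqrt_sq (norm_nonneg _), Real.sqrt_sq (norm_nonneg _)] at h7

end

noncomputable section
lemma strong_subgrad {n : ℕ} {h : Euc n → ℝ} {μ : ℝ}
    (hh : StrongConvexOn Set.univ μ h) {x g : Euc n} (hg : IsSubgradAt h x g)
    (y : Euc n) : h x + (⟪g, y - x⟫ : ℝ) + μ / 2 * ‖y - x‖ ^ 2 ≤ h y := by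
  have H : ∀ t ∈ Set.Ioo (0:ℝ) 1,
      (h x + (⟪g, y - x⟫ : ℝ)) + (1 - t) * (μ / 2 * ‖y - x‖ ^ 2) ≤ h y := by
    intro t ht
    have hc := hh.2 (Set.mem_univ x) (Set.mem_univ y)
      (by linarith [ht.2] : (0:ℝ) ≤ 1 - t) ht.1.le (by ring)
    have hsub := hg ((1 - t) • x + t • y)
    have he : ((1 - t) • x + t • y) - x = t • (y - x) := by module
    rw [he, real_inner_smul_right] at hsub
    rw [norm_sub_rev x y] at hc
    simp only [smul_eq_mul] at hc
    have h5 : t * ((h x + (⟪g, y - x⟫ : ℝ)) + (1 - t) * (μ / 2 * ‖y - x‖ ^ 2))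
        ≤ t * h y := by nlinarith
    exact le_of_mul_le_mul_left h5 ht.1
  linarith [limit_aux H]

lemma growth_at_min {n : ℕ} {X : Set (Euc n)} (hXcv : Convex ℝ X)
    {f h : Euc n → ℝ} {μ l : ℝ} (hl : 0 < l)
    (hf : ConvexOn ℝ Set.univ f) (hh : StrongConvexOn Set.univ μ h)
    {z : Euc n} (hz : z ∈ X)
    (hmin : ∀ y ∈ X, f z + l * h z ≤ f y + l * h y)
    {y : Euc n} (hy : y ∈ X) :
    f z + l * h z + l * μ / 2 * ‖y - z‖ ^ 2 ≤ f y + l * h y := by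
  have H : ∀ t ∈ Set.Ioo (0:ℝ) 1,
      (f z + l * h z) + (1 - t) * (l * μ / 2 * ‖y - z‖ ^ 2) ≤ f y + l * h y := by
    intro t ht
    have hw : (1 - t) • z + t • y ∈ X := hXcv hz hy (by linarith [ht.2]) ht.1.le (by ring)
    have h1 := hmin _ hw
    have h2 := hf.2 (Set.mem_univ z) (Set.mem_univ y)
      (by linarith [ht.2] : (0:ℝ) ≤ 1 - t) ht.1.le (by ring)
    have h3 := hh.2 (Set.mem_univ z) (Set.mem_univ y)
      (by linarith [ht.2] : (0:ℝ) ≤ 1 - t) ht.1.le (by ring)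
    rw [norm_sub_rev z y] at h3
    simp only [smul_eq_mul] at h2 h3
    have h4 := mul_le_mul_of_nonneg_left h3 hl.le
    have h5 : t * ((f z + l * h z) + (1 - t) * (l * μ / 2 * ‖y - z‖ ^ 2))
        ≤ t * (f y + l * h y) := by nlinarith
    exact le_of_mul_le_mul_left h5 ht.1
  linarith [limit_aux H]

lemma coupling {a u v K : ℝ} (ha : 0 < a) (ha1 : a ≤ 1) (hu : 0 ≤ u) (hv : 0 ≤ v)
    (hK : 0 ≤ K) (huv : u ≤ v + K) :
    (1 - 2 * a) * u ^ 2 ≤ (1 - a) * v ^ 2 + 3 / (2 * a) * K ^ 2 := by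
  have hK2 : 0 ≤ 3 / (2 * a) * K ^ 2 := by positivity
  rcases le_or_gt (1/2 : ℝ) a with hc | hc
  · have h1 : (1 - 2 * a) * u ^ 2 ≤ 0 :=
      mul_nonpos_of_nonpos_of_nonneg (by linarith) (sq_nonneg u)
    nlinarith [sq_nonneg v]
  · have h2 : u ^ 2 ≤ (v + K) ^ 2 := by nlinarith
    have h2a : (0:ℝ) < 2 * a := by linarith
    have key : (1 - 2 * a) * (v + K) ^ 2 ≤ (1 - a) * v ^ 2 + 3 / (2 * a) * K ^ 2 := by
      apply le_of_mul_le_mul_left _ h2a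
      have hfrac : 2 * a * ((1 - a) * v ^ 2 + 3 / (2 * a) * K ^ 2)
          = 2 * a * ((1 - a) * v ^ 2) + 3 * K ^ 2 := by field_simp
      rw [hfrac]
      nlinarith [sq_nonneg (a * v - (1 - 2 * a) * K), mul_nonneg ha.le (sq_nonneg K),
        mul_nonneg (mul_nonneg ha.le ha.le) (sq_nonneg K), mul_nonneg hv hK,
        mul_nonneg ha.le (mul_nonneg hv hK)]
    nlinarith [h2]
end

noncomputable section
lemma minimizer_dist {n : ℕ} {X : Set (Euc n)} (hXcv : Convex ℝ X)
    {f h : Euc n → ℝ} {μ : ℝ} (hμ : 0 < μ)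
    (hf : ConvexOn ℝ Set.univ f) (hh : StrongConvexOn Set.univ μ h)
    {l l' : ℝ} (hl : 0 < l) (hl' : 0 < l')
    {z z' : Euc n} (hz : z ∈ X) (hz' : z' ∈ X)
    (hmin : ∀ y ∈ X, f z + l * h z ≤ f y + l * h y)
    (hmin' : ∀ y ∈ X, f z' + l' * h z' ≤ f y + l' * h y)
    {gz gz' : Euc n} (hgz : IsSubgradAt h z gz) (hgz' : IsSubgradAt h z' gz')
    {Ch : ℝ} (hgzb : ‖gz‖ ≤ Ch) (hgz'b : ‖gz'‖ ≤ Ch) :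
    ‖z - z'‖ ≤ Ch / μ * (|l - l'| / l) := by
  set D := ‖z - z'‖ with hD
  have hDrev : ‖z' - z‖ = D := norm_sub_rev _ _
  have hD0 : 0 ≤ D := norm_nonneg _
  have hCh0 : 0 ≤ Ch := le_trans (norm_nonneg _) hgzb
  have hg1 := growth_at_min hXcv hl hf hh hz hmin hz'
  have hg2 := growth_at_min hXcv hl' hf hh hz' hmin' hz
  rw [hDrev] at hg1
  have hs1 := strong_subgrad hh hgz' z
  have hs2 := strong_subgrad hh hgz z'
  rw [hDrev] at hs2
  have hi1 : -(Ch * D) ≤ (⟪gz', z - z'⟫ : ℝ) := by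
    have := abs_real_inner_le_norm gz' (z - z')
    have h2 : ‖gz'‖ * ‖z - z'‖ ≤ Ch * D := mul_le_mul_of_nonneg_right hgz'b hD0
    rw [abs_le] at this
    linarith [this.1]
  have hi2 : -(Ch * D) ≤ (⟪gz, z' - z⟫ : ℝ) := by
    have := abs_real_inner_le_norm gz (z' - z)
    have h2 : ‖gz‖ * D ≤ Ch * D := mul_le_mul_of_nonneg_right hgzb hD0
    rw [abs_le] at this
    rw [hDrev] at this
    linarith [this.1]
  -- s bounds : |h z' - h z| ≤ Ch*D - μ/2 D²
  have hsb1 : h z' - h z ≤ Ch * D - μ / 2 * D ^ 2 := by linarith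
  have hsb2 : h z - h z' ≤ Ch * D - μ / 2 * D ^ 2 := by linarith
  -- combine growth inequalities
  have hsum : (l + l') * μ / 2 * D ^ 2 ≤ (l - l') * (h z' - h z) := by nlinarith
  have hkey : l * μ * D ^ 2 ≤ Ch * |l - l'| * D := by
    rcases le_or_gt l' l with hc | hc
    · rw [abs_of_nonneg (by linarith : (0:ℝ) ≤ l - l')]
      nlinarith [mul_le_mul_of_nonneg_left hsb1 (by linarith : (0:ℝ) ≤ l - l')]
    · rw [abs_sub_comm, abs_of_nonneg (by linarith : (0:ℝ) ≤ l' - l)]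
      nlinarith [mul_le_mul_of_nonneg_left hsb2 (by linarith : (0:ℝ) ≤ l' - l),
        mul_nonneg (mul_nonneg (by linarith : (0:ℝ) ≤ l' - l) hμ.le) (sq_nonneg D)]
  rcases eq_or_lt_of_le hD0 with hD0' | hD0'
  · rw [← hD0']; positivity
  · have h9 : l * μ * D ≤ Ch * |l - l'| := by
      have := le_of_mul_le_mul_right (by nlinarith : (l * μ * D) * D ≤ (Ch * |l - l'|) * D) hD0'
      exact this
    rw [show Ch / μ * (|l - l'| / l) = Ch * |l - l'| / (l * μ) by
        rw [div_mul_div_comm, mul_comm μ l],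
      le_div_iff₀ (by positivity)]
    linarith [h9]
end

lemma hKeq_aux {mr Ch γ lam μ w : ℝ} (hm : 0 < mr) (hγ : 0 < γ)
    (hlam : 0 < lam) (hμ : 0 < μ) :
    3/(2*(γ*lam*μ/(2*mr))) * (Ch/μ * w)^2 = 3*mr*Ch^2/(γ*lam*μ^3) * w^2 := by
  field_simp

noncomputable section

set_option maxHeartbeats 1000000 in
/-- recursive error bound for the IR-IG step. -/
theorem recursive_error_bound {n : ℕ} (X : Set (Euc n))
    (hXne : X.Nonempty) (hXcp : IsCompact X) (hXcv : Convex ℝ X)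
    (m : ℕ) (hm : 1 ≤ m)
    (fi : Fin m → Euc n → ℝ) (hfi : ∀ i, ConvexOn ℝ Set.univ (fi i))
    (f : Euc n → ℝ) (hfdef : f = fun y => ∑ i, fi i y)
    (h : Euc n → ℝ) (μ : ℝ) (hμ : 0 < μ) (hh : StrongConvexOn Set.univ μ h)
    (Cf Ch : ℝ)
    (gf : Fin m → Euc n → Euc n) (gh : Euc n → Euc n)
    (hgf : ∀ i, ∀ y ∈ X, IsSubgradAt (fi i) y (gf i y) ∧ ‖gf i y‖ ≤ Cf)
    (hgh : ∀ y ∈ X, IsSubgradAt h y (gh y) ∧ ‖gh y‖ ≤ Ch)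
    (hCf : ∀ i, ∀ y ∈ X, ∀ g, IsSubgradAt (fi i) y g → ‖g‖ ≤ Cf)
    (hChb : ∀ y ∈ X, ∀ g, IsSubgradAt h y g → ‖g‖ ≤ Ch)
    (xlam : ℝ → Euc n)
    (hxlam : ∀ l, 0 < l → xlam l ∈ X ∧
      ∀ y ∈ X, f (xlam l) + l * h (xlam l) ≤ f y + l * h y)
    (γk lamk : ℝ) (hγk : 0 < γk) (hlamk : 0 < lamk)
    (hstep : γk * lamk * μ ≤ 2 * (m : ℝ))
    (xk : Euc n) (hxk : xk ∈ X)
    (xi : ℕ → Euc n) (hxi0 : xi 0 = xk)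
    (hrec : ∀ i (hi : i < m),
      IsProjOn X
        (xi i - γk • (gf ⟨i, hi⟩ (xi i) + (lamk / (m : ℝ)) • gh (xi i)))
        (xi (i + 1)))
    (lamprev : ℝ) (hlamprev : 0 < lamprev) :
    ‖xi m - xlam lamk‖ ^ 2 ≤
      (1 - γk * lamk * μ / (2 * (m : ℝ))) * ‖xk - xlam lamprev‖ ^ 2 +
        3 * (m : ℝ) * Ch ^ 2 / (γk * lamk * μ ^ 3) * |1 - lamprev / lamk| ^ 2 +
        6 * (m : ℝ) ^ 2 * γk ^ 2 * (Cf ^ 2 + lamk ^ 2 * Ch ^ 2) := by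
  classical
  have hm1 : (1:ℝ) ≤ (m:ℝ) := by exact_mod_cast hm
  have hmpos : (0:ℝ) < (m:ℝ) := by linarith
  have hfconv : ConvexOn ℝ Set.univ f := by
    rw [hfdef]
    have key : ∀ s : Finset (Fin m), ConvexOn ℝ Set.univ (fun y => ∑ i ∈ s, fi i y) := by
      intro s
      induction s using Finset.induction with
      | empty => simpa using convexOn_const 0 convex_univ
      | @insert a s ha ih => simp only [Finset.sum_insert ha]; exact (hfi a).add ih
    exact key Finset.univ
  have hCf0 : 0 ≤ Cf := le_trans (norm_nonneg _) (hgf ⟨0, hm⟩ xk hxk).2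
  have hCh0 : 0 ≤ Ch := le_trans (norm_nonneg _) (hgh xk hxk).2
  set G := Cf + lamk / (m:ℝ) * Ch with hGdef
  have hG0 : 0 ≤ G := by positivity
  clear_value G
  set z := xlam lamk with hzdef
  set z' := xlam lamprev with hz'def
  obtain ⟨hzX, hzmin⟩ := hxlam lamk hlamk
  obtain ⟨hz'X, hz'min⟩ := hxlam lamprev hlamprev
  rw [← hzdef] at hzX hzmin
  rw [← hz'def] at hz'X hz'min
  clear_value z z'
  -- iterates stay in X
  have hmem : ∀ i, i ≤ m → xi i ∈ X := by
    intro i hi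
    cases i with
    | zero => rw [hxi0]; exact hxk
    | succ j => exact (hrec j (by omega)).1
  -- norm of step direction
  have hd : ∀ i (hi : i < m), ‖gf ⟨i, hi⟩ (xi i) + (lamk / (m:ℝ)) • gh (xi i)‖ ≤ G := by
    intro i hi
    have h1 := (hgf ⟨i, hi⟩ (xi i) (hmem i hi.le)).2
    have h2 := (hgh (xi i) (hmem i hi.le)).2
    rw [hGdef]
    calc ‖gf ⟨i, hi⟩ (xi i) + (lamk / (m:ℝ)) • gh (xi i)‖
        ≤ ‖gf ⟨i, hi⟩ (xi i)‖ + ‖(lamk / (m:ℝ)) • gh (xi i)‖ := norm_add_le _ _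
      _ ≤ Cf + lamk / (m:ℝ) * Ch := by
          rw [norm_smul, Real.norm_eq_abs, abs_of_pos (by positivity)]
          exact add_le_add h1 (mul_le_mul_of_nonneg_left h2 (by positivity))
  -- per-step movement
  have hmove : ∀ i (hi : i < m), ‖xi (i+1) - xi i‖ ≤ γk * G := by
    intro i hi
    have hp := proj_contract hXcv (hrec i hi) (hmem i hi.le)
    have he : (xi i - γk • (gf ⟨i, hi⟩ (xi i) + (lamk / (m:ℝ)) • gh (xi i))) - xi i
        = -(γk • (gf ⟨i, hi⟩ (xi i) + (lamk / (m:ℝ)) • gh (xi i))) := by abel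
    rw [he, norm_neg, norm_smul, Real.norm_eq_abs, abs_of_pos hγk] at hp
    exact le_trans hp (mul_le_mul_of_nonneg_left (hd i hi) hγk.le)
  -- drift from cycle start
  have hdriftI : ∀ i, i ≤ m → ‖xi i - xi 0‖ ≤ (i:ℝ) * (γk * G) := by
    intro i
    induction i with
    | zero => simp
    | succ j ih =>
      intro hj
      have h1 := hmove j (by omega)
      have h2 := ih (by omega)
      have h3 := dist_triangle (xi (j+1)) (xi j) (xi 0)
      simp only [dist_eq_norm] at h3
      push_cast
      nlinarith [h3]
  have hdrift : ∀ i, i ≤ m → ‖xi i - xi 0‖ ≤ (m:ℝ) * (γk * G) := by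
    intro i hi
    refine le_trans (hdriftI i hi) (mul_le_mul_of_nonneg_right ?_ (by positivity))
    exact_mod_cast hi
  -- the ideal decrement
  set E : ℕ → ℝ := fun i =>
    if hi : i < m then fi ⟨i, hi⟩ (xi 0) - fi ⟨i, hi⟩ z + lamk / (m:ℝ) * (h (xi 0) - h z)
    else 0 with hEdef
  clear_value E
  -- per-step inequality
  have hstepgen : ∀ i (hi : i < m),
      ‖xi (i+1) - z‖^2 ≤ ‖xi i - z‖^2 - 2*γk*(E i) - γk*lamk*μ/(m:ℝ) * ‖xi i - z‖^2
        + 2*γk*G*‖xi i - xi 0‖ + γk^2*G^2 := by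
    intro i hi
    have hxtX := hmem i hi.le
    have hsubF := (hgf ⟨i, hi⟩ (xi i) hxtX).1
    have hsubH := (hgh (xi i) hxtX).1
    have hnF := (hgf ⟨i, hi⟩ (xi i) hxtX).2
    have hnH := (hgh (xi i) hxtX).2
    have hf1 : fi ⟨i, hi⟩ (xi i) - fi ⟨i, hi⟩ z ≤ ⟪gf ⟨i, hi⟩ (xi i), xi i - z⟫ := by
      have h1 := hsubF z
      have he : (⟪gf ⟨i, hi⟩ (xi i), z - xi i⟫ : ℝ) = -⟪gf ⟨i, hi⟩ (xi i), xi i - z⟫ := by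
        rw [show z - xi i = -(xi i - z) by abel, inner_neg_right]
      rw [he] at h1; linarith
    have hf2 : fi ⟨i, hi⟩ (xi 0) - Cf * ‖xi i - xi 0‖ ≤ fi ⟨i, hi⟩ (xi i) := by
      have h1 := (hgf ⟨i, hi⟩ (xi 0) (hmem 0 (by omega))).1 (xi i)
      have h2 := abs_real_inner_le_norm (gf ⟨i, hi⟩ (xi 0)) (xi i - xi 0)
      rw [abs_le] at h2
      have h3 : ‖gf ⟨i, hi⟩ (xi 0)‖ * ‖xi i - xi 0‖ ≤ Cf * ‖xi i - xi 0‖ :=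
        mul_le_mul_of_nonneg_right (hgf ⟨i, hi⟩ (xi 0) (hmem 0 (by omega))).2 (norm_nonneg _)
      linarith [h2.1, h2.2]
    have hh1 : h (xi i) - h z + μ/2 * ‖xi i - z‖^2 ≤ ⟪gh (xi i), xi i - z⟫ := by
      have h1 := strong_subgrad hh hsubH z
      have he : (⟪gh (xi i), z - xi i⟫ : ℝ) = -⟪gh (xi i), xi i - z⟫ := by
        rw [show z - xi i = -(xi i - z) by abel, inner_neg_right]
      rw [he, norm_sub_rev z (xi i)] at h1; linarith
    have hh2 : h (xi 0) - Ch * ‖xi i - xi 0‖ ≤ h (xi i) := by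
      have h1 := (hgh (xi 0) (hmem 0 (by omega))).1 (xi i)
      have h2 := abs_real_inner_le_norm (gh (xi 0)) (xi i - xi 0)
      rw [abs_le] at h2
      have h3 : ‖gh (xi 0)‖ * ‖xi i - xi 0‖ ≤ Ch * ‖xi i - xi 0‖ :=
        mul_le_mul_of_nonneg_right (hgh (xi 0) (hmem 0 (by omega))).2 (norm_nonneg _)
      linarith [h2.1, h2.2]
    have hinner : E i - G * ‖xi i - xi 0‖ + lamk*μ/(2*(m:ℝ)) * ‖xi i - z‖^2
        ≤ ⟪gf ⟨i, hi⟩ (xi i) + (lamk / (m:ℝ)) • gh (xi i), xi i - z⟫ := by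
      have hsplit : (⟪gf ⟨i, hi⟩ (xi i) + (lamk / (m:ℝ)) • gh (xi i), xi i - z⟫ : ℝ)
          = ⟪gf ⟨i, hi⟩ (xi i), xi i - z⟫ + lamk / (m:ℝ) * ⟪gh (xi i), xi i - z⟫ := by
        rw [inner_add_left, real_inner_smul_left]
      rw [hsplit, hEdef]
      simp only [dif_pos hi]
      have h4 : lamk / (m:ℝ) * h (xi 0) - lamk / (m:ℝ) * Ch * ‖xi i - xi 0‖
            - lamk / (m:ℝ) * h z + lamk * μ / (2*(m:ℝ)) * ‖xi i - z‖^2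
          ≤ lamk / (m:ℝ) * ⟪gh (xi i), xi i - z⟫ := by
        have h4a : h (xi 0) - Ch * ‖xi i - xi 0‖ - h z + μ/2 * ‖xi i - z‖^2
            ≤ ⟪gh (xi i), xi i - z⟫ := by linarith
        have h4b := mul_le_mul_of_nonneg_left h4a
          (show (0:ℝ) ≤ lamk / (m:ℝ) by positivity)
        calc lamk / (m:ℝ) * h (xi 0) - lamk / (m:ℝ) * Ch * ‖xi i - xi 0‖
              - lamk / (m:ℝ) * h z + lamk * μ / (2*(m:ℝ)) * ‖xi i - z‖^2
            = lamk / (m:ℝ) * (h (xi 0) - Ch * ‖xi i - xi 0‖ - h z + μ/2 * ‖xi i - z‖^2) := by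
              ring
          _ ≤ _ := h4b
      rw [hGdef]
      linarith [hf1, hf2, h4]
    have hp := proj_contract hXcv (hrec i hi) hzX
    have hp2 : ‖xi (i+1) - z‖^2
        ≤ ‖(xi i - γk • (gf ⟨i, hi⟩ (xi i) + (lamk / (m:ℝ)) • gh (xi i))) - z‖^2 :=
      pow_le_pow_left₀ (norm_nonneg _) hp 2
    have hexp2 : ‖(xi i - γk • (gf ⟨i, hi⟩ (xi i) + (lamk / (m:ℝ)) • gh (xi i))) - z‖^2
        = ‖xi i - z‖^2
          - 2*(γk * ⟪gf ⟨i, hi⟩ (xi i) + (lamk / (m:ℝ)) • gh (xi i), xi i - z⟫)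
          + γk^2 * ‖gf ⟨i, hi⟩ (xi i) + (lamk / (m:ℝ)) • gh (xi i)‖^2 := by
      rw [show (xi i - γk • (gf ⟨i, hi⟩ (xi i) + (lamk / (m:ℝ)) • gh (xi i))) - z
          = (xi i - z) - γk • (gf ⟨i, hi⟩ (xi i) + (lamk / (m:ℝ)) • gh (xi i)) by abel]
      rw [norm_sub_sq_real, real_inner_smul_right, norm_smul, Real.norm_eq_abs,
        abs_of_pos hγk, mul_pow, real_inner_comm]
    rw [hexp2] at hp2
    have hd2 : ‖gf ⟨i, hi⟩ (xi i) + (lamk / (m:ℝ)) • gh (xi i)‖^2 ≤ G^2 :=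
      pow_le_pow_left₀ (norm_nonneg _) (hd i hi) 2
    have h5 := mul_le_mul_of_nonneg_left hinner (by positivity : (0:ℝ) ≤ 2*γk)
    have h5' : 2*γk*(E i) - 2*γk*G*‖xi i - xi 0‖ + γk*lamk*μ/(m:ℝ) * ‖xi i - z‖^2
        ≤ 2*γk*⟪gf ⟨i, hi⟩ (xi i) + (lamk / (m:ℝ)) • gh (xi i), xi i - z⟫ :=
      le_trans (le_of_eq (by ring)) h5
    have h6 := mul_le_mul_of_nonneg_left hd2 (sq_nonneg γk)
    linarith [hp2, h5', h6]
  -- cycle induction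
  have mainInd : ∀ j, 1 ≤ j → j ≤ m →
      ‖xi j - z‖^2 ≤ (1 - γk*lamk*μ/(m:ℝ)) * ‖xi 0 - z‖^2
        - 2*γk*(∑ i ∈ Finset.range j, E i) + (j:ℝ)*(3*(m:ℝ)*γk^2*G^2) := by
    intro j
    induction j with
    | zero => intro h1 _; exact absurd h1 (by omega)
    | succ j ih =>
      intro _ hj1
      by_cases hj0 : j = 0
      · subst hj0
        have hs := hstepgen 0 (by omega)
        rw [sub_self, norm_zero] at hs
        rw [Finset.sum_range_one]
        push_cast
        have hgg : (0:ℝ) ≤ γk^2*G^2 := by positivity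
        have h11 := mul_le_mul_of_nonneg_right hm1 hgg
        have h12 : (0:ℝ) ≤ (m:ℝ)*(γk^2*G^2) := mul_nonneg (by positivity) hgg
        have h10 : γk^2*G^2 ≤ 3*(m:ℝ)*γk^2*G^2 := by linarith only [h11, h12]
        have hcq : (0:ℝ) ≤ γk*lamk*μ/(m:ℝ)*‖xi 0 - z‖^2 :=
          mul_nonneg (by positivity) (sq_nonneg _)
        linarith only [hs, h10, hcq]
      · have hj : 1 ≤ j := by omega
        have ihj := ih hj (by omega)
        have hs := hstepgen j (by omega)
        have hdr := hdrift j (by omega)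
        have hQ : (0:ℝ) ≤ ‖xi j - z‖^2 := sq_nonneg _
        have hc0 : (0:ℝ) ≤ γk*lamk*μ/(m:ℝ) := by positivity
        have h7 := mul_le_mul_of_nonneg_left hdr (by positivity : (0:ℝ) ≤ 2*γk*G)
        have h8 : (0:ℝ) ≤ γk^2*G^2 := by positivity
        have h7' : 2*γk*G*‖xi j - xi 0‖ ≤ 2*(m:ℝ)*γk^2*G^2 :=
          le_trans h7 (le_of_eq (by ring))
        have hcq : (0:ℝ) ≤ γk*lamk*μ/(m:ℝ)*‖xi j - z‖^2 := mul_nonneg hc0 hQ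
        have h11 := mul_le_mul_of_nonneg_right hm1 h8
        have h12 : (0:ℝ) ≤ (m:ℝ)*(γk^2*G^2) := mul_nonneg (by positivity) h8
        have h10 : 2*(m:ℝ)*γk^2*G^2 + γk^2*G^2 ≤ 3*(m:ℝ)*γk^2*G^2 := by
          linarith only [h11, h12]
        rw [Finset.sum_range_succ]
        push_cast
        linarith only [hs, ihj, h7', hcq, h10]
  have hfin := mainInd m hm (le_refl m)
  -- sum of the ideal decrements
  have hEsum : ∑ i ∈ Finset.range m, E i = (f (xi 0) - f z) + lamk * (h (xi 0) - h z) := by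
    rw [← Fin.sum_univ_eq_sum_range]
    have h1 : ∀ i : Fin m, E i.1 = fi i (xi 0) - fi i z + lamk / (m:ℝ) * (h (xi 0) - h z) := by
      intro i
      rw [hEdef]
      simp only [dif_pos i.2, Fin.eta]
    rw [Finset.sum_congr rfl fun i _ => h1 i]
    rw [Finset.sum_add_distrib, Finset.sum_sub_distrib, Finset.sum_const, Finset.card_univ,
      Fintype.card_fin, hfdef, nsmul_eq_mul]
    have h2 : (m:ℝ) * (lamk / (m:ℝ) * (h (xi 0) - h z)) = lamk * (h (xi 0) - h z) := by
      field_simp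
    rw [h2]
  have hEpos : 0 ≤ ∑ i ∈ Finset.range m, E i := by
    rw [hEsum]
    have := hzmin (xi 0) (hmem 0 (by omega))
    linarith
  have hmain2 : ‖xi m - z‖^2
      ≤ (1 - γk*lamk*μ/(m:ℝ)) * ‖xi 0 - z‖^2 + 3*(m:ℝ)^2*γk^2*G^2 := by
    have h9 := mul_le_mul_of_nonneg_left hEpos (by positivity : (0:ℝ) ≤ 2*γk)
    rw [mul_zero] at h9
    linarith [hfin, h9]
  -- distance between the two regularization-path points
  have hDz : ‖z - z'‖ ≤ Ch/μ * (|lamk - lamprev|/lamk) :=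
    minimizer_dist hXcv hμ hfconv hh hlamk hlamprev hzX hz'X hzmin hz'min
      (hgh z hzX).1 (hgh z' hz'X).1 (hgh z hzX).2 (hgh z' hz'X).2
  have htri : ‖xi 0 - z‖ ≤ ‖xi 0 - z'‖ + Ch/μ * (|lamk - lamprev|/lamk) := by
    have h1 := dist_triangle (xi 0) z' z
    simp only [dist_eq_norm] at h1
    have h2 : ‖z' - z‖ = ‖z - z'‖ := norm_sub_rev _ _
    linarith [hDz]
  set a := γk*lamk*μ/(2*(m:ℝ)) with ha
  clear_value a
  have ha0 : 0 < a := by rw [ha]; positivity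
  have ha1 : a ≤ 1 := by rw [ha, div_le_one (by positivity)]; linarith
  have hK0 : 0 ≤ Ch/μ * (|lamk - lamprev|/lamk) := by positivity
  have hcoup := coupling ha0 ha1 (norm_nonneg (xi 0 - z)) (norm_nonneg (xi 0 - z')) hK0 htri
  have h2a : γk*lamk*μ/(m:ℝ) = 2*a := by rw [ha]; ring
  have habs : |1 - lamprev/lamk| = |lamk - lamprev|/lamk := by
    rw [show (1:ℝ) - lamprev/lamk = (lamk - lamprev)/lamk by field_simp, abs_div,
      abs_of_pos hlamk]
  have hKeq : 3/(2*a) * (Ch/μ * (|lamk - lamprev|/lamk))^2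
      = 3*(m:ℝ)*Ch^2/(γk*lamk*μ^3) * |1 - lamprev/lamk|^2 := by
    rw [habs, ha]
    exact hKeq_aux hmpos hγk hlamk hμ
  have hmG : (m:ℝ) * G = (m:ℝ)*Cf + lamk*Ch := by
    rw [hGdef]; field_simp
  have hGle : 3*(m:ℝ)^2*γk^2*G^2 ≤ 6*(m:ℝ)^2*γk^2*(Cf^2 + lamk^2*Ch^2) := by
    have h1 : ((m:ℝ)*G)^2 ≤ 2*((m:ℝ)^2*Cf^2 + lamk^2*Ch^2) := by
      rw [hmG]; nlinarith [sq_nonneg ((m:ℝ)*Cf - lamk*Ch)]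
    have hm2 : (1:ℝ) ≤ (m:ℝ)^2 := by nlinarith
    have h3 : (0:ℝ) ≤ lamk^2*Ch^2 := by positivity
    nlinarith [sq_nonneg γk, mul_nonneg (sq_nonneg γk) h3]
  rw [hxi0] at hmain2 hcoup
  calc ‖xi m - z‖^2
      ≤ (1 - 2*a) * ‖xk - z‖^2 + 3*(m:ℝ)^2*γk^2*G^2 := by rw [← h2a]; linarith [hmain2]
    _ ≤ ((1-a)*‖xk - z'‖^2 + 3/(2*a)*(Ch/μ * (|lamk - lamprev|/lamk))^2)
          + 3*(m:ℝ)^2*γk^2*G^2 := by linarith [hcoup]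
    _ ≤ (1 - a) * ‖xk - z'‖^2
          + 3*(m:ℝ)*Ch^2/(γk*lamk*μ^3) * |1 - lamprev/lamk|^2
          + 6*(m:ℝ)^2*γk^2*(Cf^2 + lamk^2*Ch^2) := by
        rw [← hKeq]
        linarith [hGle]
end
end

section
/- Under Assumption 1, with positive non-increasing sequences $\{\gamma_k\}, \{\lambda_k\}$ and $r < 1$, the weighted averages $\bar{x}_N = \sum_{k=0}^{N-1} \psi_{k,N-1} x_k$ (with $\psi_{k,N-1} = \gamma_k^r/\sum_{i=0}^{N-1}\gamma_i^r$) of the iterates of the iteratively regularized incremental subgradient algorithm satisfy: $f(\bar{x}_N) - f^* \leq (\sum_{k=0}^{N-1}\gamma_k^r)^{-1} [m \sum_{k=0}^{N-1}\gamma_k^{r+1}(C_f^2 + \lambda_k^2 C_h^2) + m^2 C_f \sum_{k=0}^{N-1}\gamma_k^{r+1}(C_f + \lambda_k C_h) + 2M_h \sum_{k=0}^{N-1}\gamma_k^r \lambda_k + 2M^2 \gamma_{N-1}^{r-1}]$, where $M_h \geq \sup_{x\in X}|h(x)|$ and $M \geq \sup_{x \in X}\|x\|$. -/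
open Filter Finset Real Set
open scoped RealInnerProductSpace Topology BigOperators

noncomputable section

lemma proj_nonexpansive {n : ℕ} {X : Set (Euc n)} (hX : Convex ℝ X)
    {p y : Euc n} (hp : IsProjOn X p y) {z : Euc n} (hz : z ∈ X) :
    ‖y - z‖ ≤ ‖p - z‖ := by
  obtain ⟨hy, hmin⟩ := hp
  haveI : Nonempty X := ⟨⟨y, hy⟩⟩
  have hinf : ‖p - y‖ = ⨅ w : X, ‖p - (w : Euc n)‖ := by
    refine le_antisymm (le_ciInf fun w => hmin w w.2) ?_
    exact ciInf_le ⟨0, by rintro b ⟨w, rfl⟩; exact norm_nonneg _⟩ (⟨y, hy⟩ : X)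
  have hVI := (norm_eq_iInf_iff_real_inner_le_zero hX hy).mp hinf
  have h1 : ⟪p - y, z - y⟫ ≤ 0 := hVI z hz
  have h2 : ‖p - z‖^2 = ‖p - y‖^2 + 2*⟪p - y, y - z⟫ + ‖y - z‖^2 := by
    have := norm_add_sq_real (p - y) (y - z)
    rw [sub_add_sub_cancel] at this
    linarith
  have h3 : ⟪p - y, y - z⟫ = - ⟪p - y, z - y⟫ := by
    rw [← inner_neg_right, neg_sub]
  have hsq : ‖y - z‖^2 ≤ ‖p - z‖^2 := by nlinarith [sq_nonneg (‖p - y‖)]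
  have := Real.sqrt_le_sqrt hsq
  rwa [Real.sqrt_sq (norm_nonneg _), Real.sqrt_sq (norm_nonneg _)] at this

lemma abel_bound (c a : ℕ → ℝ) (B : ℝ) (hc0 : ∀ k, 0 ≤ c k) (hcmono : Monotone c)
    (ha0 : ∀ k, 0 ≤ a k) (haB : ∀ k, a k ≤ B) :
    ∀ N, 1 ≤ N → ∑ k ∈ Finset.range N, c k * (a k - a (k+1)) ≤ B * c (N-1) - c (N-1) * a N := by
  intro N hN
  induction N, hN using Nat.le_induction with
  | base => simp only [Finset.sum_range_one]
            nlinarith [hc0 0, ha0 1, haB 0]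
  | succ N hN ih =>
    rw [Finset.sum_range_succ]
    have h1 : c (N-1) ≤ c N := hcmono (Nat.sub_le N 1)
    have h2 : (N + 1) - 1 = N := rfl
    rw [h2]
    nlinarith [hc0 N, hc0 (N-1), ha0 N, ha0 (N+1), haB N]

lemma sum_id_le (m : ℕ) : ∑ j ∈ Finset.range m, (j:ℝ) ≤ (m:ℝ)^2/2 := by
  induction m with
  | zero => simp
  | succ k ih =>
    rw [Finset.sum_range_succ]
    push_cast
    nlinarith [Nat.cast_nonneg (α := ℝ) k]

lemma convexOn_finset_sum {ι : Type*} {E : Type*} [AddCommGroup E] [Module ℝ E] {s : Set E}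
    (t : Finset ι) (f : ι → E → ℝ) (hf : ∀ i ∈ t, ConvexOn ℝ s (f i)) (hs : Convex ℝ s) :
    ConvexOn ℝ s (fun x => ∑ i ∈ t, f i x) := by
  classical
  induction t using Finset.induction_on with
  | empty => simpa using convexOn_const 0 hs
  | @insert i t hnotmem ih =>
    simp only [Finset.sum_insert hnotmem]
    exact (hf i (Finset.mem_insert_self i t)).add (ih fun j hj => hf j (Finset.mem_insert_of_mem hj))
set_option maxHeartbeats 2000000 in
/-- error bound for the averaged iterates in terms of `f`. -/
theorem averaging_error_bound {n : ℕ} (X : Set (Euc n))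
    (hXne : X.Nonempty) (hXcp : IsCompact X) (hXcv : Convex ℝ X)
    (m : ℕ) (hm : 1 ≤ m)
    (fi : Fin m → Euc n → ℝ) (hfi : ∀ i, ConvexOn ℝ Set.univ (fi i))
    (f : Euc n → ℝ) (hfdef : f = fun y => ∑ i, fi i y)
    (h : Euc n → ℝ) (μ : ℝ) (hμ : 0 < μ) (hh : StrongConvexOn Set.univ μ h)
    (Cf Ch : ℝ)
    (gf : Fin m → Euc n → Euc n) (gh : Euc n → Euc n)
    (hgf : ∀ i, ∀ y ∈ X, IsSubgradAt (fi i) y (gf i y) ∧ ‖gf i y‖ ≤ Cf)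
    (hgh : ∀ y ∈ X, IsSubgradAt h y (gh y) ∧ ‖gh y‖ ≤ Ch)
    (hCf : ∀ i, ∀ y ∈ X, ∀ g, IsSubgradAt (fi i) y g → ‖g‖ ≤ Cf)
    (hChb : ∀ y ∈ X, ∀ g, IsSubgradAt h y g → ‖g‖ ≤ Ch)
    (γ lam : ℕ → ℝ) (hγpos : ∀ k, 0 < γ k) (hlampos : ∀ k, 0 < lam k)
    (x : ℕ → Euc n) (xi : ℕ → ℕ → Euc n)
    (hx0 : x 0 ∈ X) (hxi0 : ∀ k, xi k 0 = x k)
    (hrec : ∀ k, ∀ i (hi : i < m),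
      IsProjOn X
        (xi k i - γ k • (gf ⟨i, hi⟩ (xi k i) + (lam k / (m : ℝ)) • gh (xi k i)))
        (xi k (i + 1)))
    (hnext : ∀ k, x (k + 1) = xi k m)
    (hγmono : Antitone γ) (hlammono : Antitone lam)
    (r : ℝ) (hr : r < 1)
    (M Mh : ℝ) (hM : ∀ y ∈ X, ‖y‖ ≤ M) (hMh : ∀ y ∈ X, |h y| ≤ Mh)
    (fstar : ℝ) (xstar : Euc n) (hxstar : xstar ∈ X ∧ ∀ y ∈ X, f xstar ≤ f y)
    (hfstar : fstar = f xstar)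
    (N : ℕ) (hN : 1 ≤ N) :
    f (∑ k ∈ Finset.range N, (γ k ^ r / ∑ i ∈ Finset.range N, γ i ^ r) • x k) - fstar ≤
      (∑ k ∈ Finset.range N, γ k ^ r)⁻¹ *
        ((m : ℝ) * ∑ k ∈ Finset.range N, γ k ^ (r + 1) * (Cf ^ 2 + lam k ^ 2 * Ch ^ 2) +
          (m : ℝ) ^ 2 * Cf * ∑ k ∈ Finset.range N, γ k ^ (r + 1) * (Cf + lam k * Ch) +
          2 * Mh * ∑ k ∈ Finset.range N, γ k ^ r * lam k +
          2 * M ^ 2 * γ (N - 1) ^ (r - 1)) := by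
  classical
  obtain ⟨hxstarX, hxstarmin⟩ := hxstar
  have hm0 : (0:ℝ) < (m:ℝ) := by exact_mod_cast Nat.lt_of_lt_of_le Nat.zero_lt_one hm
  have hmR : (1:ℝ) ≤ (m:ℝ) := by exact_mod_cast hm
  obtain ⟨y0, hy0⟩ := hXne
  have hCf0 : 0 ≤ Cf := le_trans (norm_nonneg _) (hgf ⟨0, hm⟩ y0 hy0).2
  have hCh0 : 0 ≤ Ch := le_trans (norm_nonneg _) (hgh y0 hy0).2
  have hMh0 : 0 ≤ Mh := le_trans (abs_nonneg _) (hMh y0 hy0)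
  have hM0 : 0 ≤ M := le_trans (norm_nonneg _) (hM y0 hy0)
  have hlam0 : ∀ k, 0 ≤ lam k := fun k => (hlampos k).le
  -- membership
  have hxiX : ∀ k, x k ∈ X → ∀ i, i ≤ m → xi k i ∈ X := by
    intro k hk i hi
    cases i with
    | zero => rw [hxi0]; exact hk
    | succ j => exact (hrec k j (by omega)).1
  have hxX : ∀ k, x k ∈ X := by
    intro k
    induction k with
    | zero => exact hx0
    | succ j ih => rw [hnext j]; exact hxiX j ih m le_rfl
  set D : ℕ → ℝ := fun k => Cf + lam k / m * Ch with hD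
  have hlm0 : ∀ k, 0 ≤ lam k / m := fun k => div_nonneg (hlam0 k) hm0.le
  have hD0 : ∀ k, 0 ≤ D k := fun k => add_nonneg hCf0 (mul_nonneg (hlm0 k) hCh0)
  have hgb : ∀ k i (hi : i < m),
      ‖gf ⟨i, hi⟩ (xi k i) + (lam k / m) • gh (xi k i)‖ ≤ D k := by
    intro k i hi
    have hmem := hxiX k (hxX k) i hi.le
    calc ‖gf ⟨i, hi⟩ (xi k i) + (lam k / m) • gh (xi k i)‖
        ≤ ‖gf ⟨i, hi⟩ (xi k i)‖ + ‖(lam k / m) • gh (xi k i)‖ := norm_add_le _ _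
      _ ≤ Cf + lam k / m * Ch := by
          rw [norm_smul, Real.norm_eq_abs, abs_of_nonneg (hlm0 k)]
          exact add_le_add (hgf ⟨i, hi⟩ _ hmem).2
            (mul_le_mul_of_nonneg_left (hgh _ hmem).2 (hlm0 k))
  -- distance from x k inside a cycle
  have hdist : ∀ k i, i ≤ m → ‖xi k i - x k‖ ≤ (i:ℝ) * γ k * D k := by
    intro k i
    induction i with
    | zero => intro _; simp [hxi0 k]
    | succ j ih =>
      intro hj1
      have hj : j < m := hj1
      have hz := hxiX k (hxX k) j hj.le
      have h1 : ‖xi k (j+1) - xi k j‖ ≤ γ k * D k := by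
        have h2 := proj_nonexpansive hXcv (hrec k j hj) hz
        have h3 : xi k j - γ k • (gf ⟨j, hj⟩ (xi k j) + (lam k / m) • gh (xi k j)) - xi k j
            = -(γ k • (gf ⟨j, hj⟩ (xi k j) + (lam k / m) • gh (xi k j))) := by abel
        rw [h3, norm_neg, norm_smul, Real.norm_eq_abs, abs_of_pos (hγpos k)] at h2
        exact h2.trans (mul_le_mul_of_nonneg_left (hgb k j hj) (hγpos k).le)
      have h4 : ‖xi k (j+1) - x k‖ ≤ ‖xi k (j+1) - xi k j‖ + ‖xi k j - x k‖ := by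
        have : xi k (j+1) - x k = (xi k (j+1) - xi k j) + (xi k j - x k) := by abel
        rw [this]; exact norm_add_le _ _
      have h5 := ih hj.le
      have h6 : 0 ≤ γ k * D k := mul_nonneg (hγpos k).le (hD0 k)
      push_cast
      have T := add_le_add h1 h5
      linarith [T]
  -- the extended functions
  set F : ℕ → Euc n → ℝ := fun j y => if hj : j < m then fi ⟨j, hj⟩ y else 0 with hF
  have hFeq : ∀ j (hj : j < m) (y : Euc n), F j y = fi ⟨j, hj⟩ y := fun j hj y => dif_pos hj
  have hFsum : ∀ y, ∑ j ∈ Finset.range m, F j y = f y := by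
    intro y
    rw [hfdef]
    rw [← Fin.sum_univ_eq_sum_range (fun j => F j y) m]
    exact Finset.sum_congr rfl fun i _ => by simp only [hF, i.isLt, dif_pos, Fin.eta]
  -- one inner step inequality
  have hstep : ∀ k i (hi : i < m),
      ‖xi k (i+1) - xstar‖^2 ≤ ‖xi k i - xstar‖^2
        - 2*γ k*(F i (x k) - F i xstar)
        + 2*γ k^2*Cf*(D k)*(i:ℝ) + 4*γ k*(lam k/m)*Mh + γ k^2*(D k)^2 := by
    intro k i hi
    have hγk := hγpos k
    have humem : xi k i ∈ X := hxiX k (hxX k) i hi.le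
    set u := xi k i with hu
    set g1 := gf ⟨i, hi⟩ u with hg1
    set g2 := gh u with hg2
    set g : Euc n := g1 + (lam k / m) • g2 with hg
    have hnon : ‖xi k (i+1) - xstar‖ ≤ ‖(u - γ k • g) - xstar‖ :=
      proj_nonexpansive hXcv (hrec k i hi) hxstarX
    have hnon2 : ‖xi k (i+1) - xstar‖^2 ≤ ‖(u - γ k • g) - xstar‖^2 :=
      pow_le_pow_left₀ (norm_nonneg _) hnon 2
    have hexp : ‖(u - γ k • g) - xstar‖^2
        = ‖u - xstar‖^2 - 2*(γ k)*(⟪g, u - xstar⟫) + γ k^2*‖g‖^2 := by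
      have h0 : (u - γ k • g) - xstar = (u - xstar) - γ k • g := by abel
      rw [h0, norm_sub_sq_real, real_inner_smul_right, real_inner_comm, norm_smul,
        Real.norm_eq_abs, mul_pow, sq_abs]
      ring
    -- bound the inner product from below
    have s1 := (hgf ⟨i, hi⟩ u humem).1 xstar
    have e1 : (⟪g1, xstar - u⟫ : ℝ) = -⟪g1, u - xstar⟫ := by
      rw [← inner_neg_right, neg_sub]
    rw [e1] at s1
    have s2 := (hgh u humem).1 xstar
    have e2 : (⟪g2, xstar - u⟫ : ℝ) = -⟪g2, u - xstar⟫ := by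
      rw [← inner_neg_right, neg_sub]
    rw [e2] at s2
    have hhu := abs_le.mp (hMh u humem)
    have hhs := abs_le.mp (hMh xstar hxstarX)
    have s2' : -(2*Mh) ≤ (⟪g2, u - xstar⟫ : ℝ) := by linarith
    have s3 := (hgf ⟨i, hi⟩ (x k) (hxX k)).1 u
    have s3' : fi ⟨i, hi⟩ (x k) - Cf*((i:ℝ)*γ k*D k) ≤ fi ⟨i, hi⟩ u := by
      have hCS : |(⟪gf ⟨i, hi⟩ (x k), u - x k⟫ : ℝ)| ≤ ‖gf ⟨i, hi⟩ (x k)‖ * ‖u - x k‖ :=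
        abs_real_inner_le_norm _ _
      have hnb : ‖gf ⟨i, hi⟩ (x k)‖ ≤ Cf := (hgf _ (x k) (hxX k)).2
      have hdd : ‖u - x k‖ ≤ (i:ℝ)*γ k*D k := hdist k i hi.le
      have hmm : ‖gf ⟨i, hi⟩ (x k)‖ * ‖u - x k‖ ≤ Cf*((i:ℝ)*γ k*D k) :=
        mul_le_mul hnb hdd (norm_nonneg _) hCf0
      have := neg_le_abs (⟪gf ⟨i, hi⟩ (x k), u - x k⟫ : ℝ)
      linarith
    have hin : (⟪g, u - xstar⟫ : ℝ) = ⟪g1, u - xstar⟫ + (lam k/m)*⟪g2, u - xstar⟫ := by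
      rw [hg, inner_add_left, real_inner_smul_left]
    have hip : (F i (x k) - F i xstar) - Cf*((i:ℝ)*γ k*D k) - (lam k/m)*(2*Mh)
        ≤ (⟪g, u - xstar⟫ : ℝ) := by
      rw [hin, hFeq i hi, hFeq i hi]
      have h7 := mul_le_mul_of_nonneg_left s2' (hlm0 k)
      have h8 : lam k / ↑m * -(2*Mh) = -(lam k / ↑m * (2*Mh)) := by ring
      rw [h8] at h7
      have T1 : fi ⟨i,hi⟩ u - fi ⟨i,hi⟩ xstar ≤ (⟪g1, u - xstar⟫:ℝ) := by linarith [s1]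
      have T2 : -(lam k / ↑m * (2*Mh)) ≤ lam k / ↑m * (⟪g2, u - xstar⟫:ℝ) := by linarith [h7]
      have T3 : fi ⟨i,hi⟩ (x k) - Cf*((i:ℝ)*γ k*D k) ≤ fi ⟨i,hi⟩ u := s3'
      have T4 := add_le_add (add_le_add T1 T2) T3
      linarith [T4]
    have hgn : ‖g‖ ≤ D k := hgb k i hi
    have hgn2 : ‖g‖^2 ≤ (D k)^2 := pow_le_pow_left₀ (norm_nonneg _) hgn 2
    have t1 : γ k^2*‖g‖^2 ≤ γ k^2*(D k)^2 :=
      mul_le_mul_of_nonneg_left hgn2 (sq_nonneg _)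
    have t2 := mul_le_mul_of_nonneg_left hip (by linarith : (0:ℝ) ≤ 2*γ k)
    calc ‖xi k (i+1) - xstar‖^2 ≤ ‖(u - γ k • g) - xstar‖^2 := hnon2
      _ = ‖u - xstar‖^2 - 2*(γ k)*(⟪g, u - xstar⟫) + γ k^2*‖g‖^2 := hexp
      _ ≤ ‖u - xstar‖^2
          - 2*γ k*((F i (x k) - F i xstar) - Cf*((i:ℝ)*γ k*D k) - (lam k/m)*(2*Mh))
          + γ k^2*(D k)^2 := by
          have T5 := add_le_add t2 t1
          linarith [T5]
      _ = ‖xi k i - xstar‖^2 - 2*γ k*(F i (x k) - F i xstar)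
          + 2*γ k^2*Cf*(D k)*(i:ℝ) + 4*γ k*(lam k/m)*Mh + γ k^2*(D k)^2 := by
          rw [hu]; ring
  -- cycle invariant
  have hQ : ∀ k i, i ≤ m → ‖xi k i - xstar‖^2 ≤ ‖x k - xstar‖^2
      - 2*γ k*(∑ j ∈ Finset.range i, (F j (x k) - F j xstar))
      + 2*γ k^2*Cf*(D k)*(∑ j ∈ Finset.range i, (j:ℝ))
      + (i:ℝ)*(4*γ k*(lam k/m)*Mh + γ k^2*(D k)^2) := by
    intro k i
    induction i with
    | zero => intro _; simp [hxi0 k]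
    | succ j ih =>
      intro hj1
      have hj : j < m := hj1
      have h1 := hstep k j hj
      have h2 := ih hj.le
      rw [Finset.sum_range_succ, Finset.sum_range_succ]
      push_cast
      have T := add_le_add h1 h2
      linarith [T]
  -- per cycle bound
  have hcycle : ∀ k, ‖x (k+1) - xstar‖^2 ≤ ‖x k - xstar‖^2 - 2*γ k*(f (x k) - fstar)
      + γ k^2*((m:ℝ)*(D k)^2 + (m:ℝ)^2*Cf*(D k)) + 4*γ k*lam k*Mh := by
    intro k
    have hq := hQ k m le_rfl
    rw [hnext k]
    have hsum1 : ∑ j ∈ Finset.range m, (F j (x k) - F j xstar) = f (x k) - fstar := by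
      rw [Finset.sum_sub_distrib, hFsum, hFsum, hfstar]
    rw [hsum1] at hq
    have hnn : 0 ≤ 2*γ k^2*Cf*D k := mul_nonneg (mul_nonneg (by positivity) hCf0) (hD0 k)
    have hsum2 : 2*γ k^2*Cf*(D k)*(∑ j ∈ Finset.range m, (j:ℝ))
        ≤ γ k^2*((m:ℝ)^2*Cf*(D k)) := by
      calc 2*γ k^2*Cf*(D k)*(∑ j ∈ Finset.range m, (j:ℝ))
          ≤ 2*γ k^2*Cf*(D k)*((m:ℝ)^2/2) := mul_le_mul_of_nonneg_left (sum_id_le m) hnn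
        _ = γ k^2*((m:ℝ)^2*Cf*(D k)) := by ring
    have hexpand : (m:ℝ)*(4*γ k*(lam k/m)*Mh + γ k^2*(D k)^2)
        = 4*γ k*lam k*Mh + γ k^2*((m:ℝ)*(D k)^2) := by
      field_simp
    rw [hexpand] at hq
    linarith
  -- per-k weighted bound
  have hperk : ∀ k, γ k ^ r * (f (x k) - fstar)
      ≤ γ k ^ (r-1)/2 * (‖x k - xstar‖^2 - ‖x (k+1) - xstar‖^2)
        + γ k ^ (r+1) * ((m:ℝ)*(Cf^2 + lam k^2*Ch^2) + (m:ℝ)^2*Cf*(Cf + lam k*Ch))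
        + γ k ^ r * (2*lam k*Mh) := by
    intro k
    have hγk := hγpos k
    have hne : γ k ≠ 0 := hγk.ne'
    have id1 : γ k ^ (r-1) * γ k = γ k ^ r := by
      rw [← Real.rpow_add_one hne (r-1)]; norm_num
    have id2 : γ k ^ (r-1) * (γ k * γ k) = γ k ^ (r+1) := by
      rw [← mul_assoc, id1, ← Real.rpow_add_one hne r]
    have hc0 : (0:ℝ) ≤ γ k ^ (r-1)/2 := div_nonneg (Real.rpow_pos_of_pos hγk _).le (by norm_num)
    have key := hcycle k
    have hmul := mul_le_mul_of_nonneg_left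
      (show 2*γ k*(f (x k) - fstar) ≤ (‖x k - xstar‖^2 - ‖x (k+1) - xstar‖^2)
          + γ k^2*((m:ℝ)*(D k)^2 + (m:ℝ)^2*Cf*(D k)) + 4*γ k*lam k*Mh by linarith)
      hc0
    have lhs_eq : γ k ^ (r-1)/2 * (2*γ k*(f (x k) - fstar)) = γ k ^ r * (f (x k) - fstar) := by
      rw [← id1]; ring
    have rhs_eq : γ k ^ (r-1)/2 * ((‖x k - xstar‖^2 - ‖x (k+1) - xstar‖^2)
          + γ k^2*((m:ℝ)*(D k)^2 + (m:ℝ)^2*Cf*(D k)) + 4*γ k*lam k*Mh)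
        = γ k ^ (r-1)/2 * (‖x k - xstar‖^2 - ‖x (k+1) - xstar‖^2)
          + γ k ^ (r+1) * (((m:ℝ)*(D k)^2 + (m:ℝ)^2*Cf*(D k))/2)
          + γ k ^ r * (2*lam k*Mh) := by
      rw [← id1, ← id2]; ring
    rw [lhs_eq, rhs_eq] at hmul
    have hmid : ((m:ℝ)*(D k)^2 + (m:ℝ)^2*Cf*(D k))/2
        ≤ (m:ℝ)*(Cf^2 + lam k^2*Ch^2) + (m:ℝ)^2*Cf*(Cf + lam k*Ch) := by
      have ht : lam k/m*Ch ≤ lam k*Ch := by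
        rw [div_mul_eq_mul_div]
        exact div_le_self (mul_nonneg (hlam0 k) hCh0) hmR
      have ht0 : 0 ≤ lam k/m*Ch := mul_nonneg (hlm0 k) hCh0
      have hD' : D k = Cf + lam k/m*Ch := rfl
      have hlch : 0 ≤ lam k*Ch := mul_nonneg (hlam0 k) hCh0
      rw [hD']
      have h2 : (lam k/m*Ch)^2 ≤ (lam k*Ch)^2 := by nlinarith [mul_le_mul ht ht ht0 hlch]
      have hA : (m:ℝ)*(Cf + lam k/m*Ch)^2 ≤ (m:ℝ)*(2*Cf^2 + 2*(lam k^2*Ch^2)) := by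
        apply mul_le_mul_of_nonneg_left _ hm0.le
        nlinarith [sq_nonneg (Cf - lam k/m*Ch)]
      have hB : (m:ℝ)^2*Cf*(Cf + lam k/m*Ch) ≤ (m:ℝ)^2*Cf*(Cf + lam k*Ch) := by
        apply mul_le_mul_of_nonneg_left (by linarith) (mul_nonneg (sq_nonneg _) hCf0)
      have hC : (0:ℝ) ≤ (m:ℝ)^2*Cf*(Cf + lam k*Ch) := by
        apply mul_nonneg (mul_nonneg (sq_nonneg _) hCf0)
        have : (0:ℝ) ≤ lam k*Ch := hlch
        linarith
      linarith [hA, hB, hC]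
    have hpow : (0:ℝ) ≤ γ k ^ (r+1) := (Real.rpow_pos_of_pos hγk _).le
    have := mul_le_mul_of_nonneg_left hmid hpow
    linarith
  -- put sums together
  set S := ∑ i ∈ Finset.range N, γ i ^ r with hS
  have hSpos : 0 < S :=
    Finset.sum_pos (fun k _ => Real.rpow_pos_of_pos (hγpos k) r)
      (Finset.nonempty_range_iff.mpr (by omega))
  set Big : ℝ := (m : ℝ) * ∑ k ∈ Finset.range N, γ k ^ (r + 1) * (Cf ^ 2 + lam k ^ 2 * Ch ^ 2) +
          (m : ℝ) ^ 2 * Cf * ∑ k ∈ Finset.range N, γ k ^ (r + 1) * (Cf + lam k * Ch) +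
          2 * Mh * ∑ k ∈ Finset.range N, γ k ^ r * lam k +
          2 * M ^ 2 * γ (N - 1) ^ (r - 1) with hBig
  have habel : ∑ k ∈ Finset.range N, γ k ^ (r-1)/2 * (‖x k - xstar‖^2 - ‖x (k+1) - xstar‖^2)
      ≤ 2 * M ^ 2 * γ (N - 1) ^ (r - 1) := by
    have hcm : Monotone (fun k => γ k ^ (r-1)/2) := by
      intro k l hkl
      have h1 := Real.rpow_le_rpow_of_nonpos (hγpos l) (hγmono hkl) (by linarith : r - 1 ≤ 0)
      dsimp only
      linarith
    have hB : ∀ k, ‖x k - xstar‖^2 ≤ 4*M^2 := by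
      intro k
      have h1 : ‖x k - xstar‖ ≤ ‖x k‖ + ‖xstar‖ := norm_sub_le _ _
      have h2 : ‖x k‖ ≤ M := hM _ (hxX k)
      have h3 : ‖xstar‖ ≤ M := hM _ hxstarX
      nlinarith [norm_nonneg (x k - xstar)]
    have := abel_bound (fun k => γ k ^ (r-1)/2) (fun k => ‖x k - xstar‖^2) (4*M^2)
      (fun k => div_nonneg (Real.rpow_pos_of_pos (hγpos k) _).le (by norm_num)) hcm
      (fun k => sq_nonneg _) hB N hN
    have hcN : (0:ℝ) ≤ γ (N-1) ^ (r-1)/2 := div_nonneg (Real.rpow_pos_of_pos (hγpos _) _).le (by norm_num)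
    have haN : (0:ℝ) ≤ ‖x N - xstar‖^2 := sq_nonneg _
    calc ∑ k ∈ Finset.range N, γ k ^ (r-1)/2 * (‖x k - xstar‖^2 - ‖x (k+1) - xstar‖^2)
        ≤ 4*M^2 * (γ (N-1) ^ (r-1)/2) - γ (N-1) ^ (r-1)/2 * ‖x N - xstar‖^2 := this
      _ ≤ 2 * M ^ 2 * γ (N - 1) ^ (r - 1) := by nlinarith
  have hsumall : ∑ k ∈ Finset.range N, γ k ^ r * (f (x k) - fstar) ≤ Big := by
    calc ∑ k ∈ Finset.range N, γ k ^ r * (f (x k) - fstar)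
        ≤ ∑ k ∈ Finset.range N, (γ k ^ (r-1)/2 * (‖x k - xstar‖^2 - ‖x (k+1) - xstar‖^2)
            + γ k ^ (r+1) * ((m:ℝ)*(Cf^2 + lam k^2*Ch^2) + (m:ℝ)^2*Cf*(Cf + lam k*Ch))
            + γ k ^ r * (2*lam k*Mh)) := Finset.sum_le_sum fun k _ => hperk k
      _ = (∑ k ∈ Finset.range N, γ k ^ (r-1)/2 * (‖x k - xstar‖^2 - ‖x (k+1) - xstar‖^2))
            + (∑ k ∈ Finset.range N, γ k ^ (r+1) * ((m:ℝ)*(Cf^2 + lam k^2*Ch^2) + (m:ℝ)^2*Cf*(Cf + lam k*Ch)))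
            + (∑ k ∈ Finset.range N, γ k ^ r * (2*lam k*Mh)) := by
          rw [Finset.sum_add_distrib, Finset.sum_add_distrib]
      _ = (∑ k ∈ Finset.range N, γ k ^ (r-1)/2 * (‖x k - xstar‖^2 - ‖x (k+1) - xstar‖^2))
            + ((m : ℝ) * ∑ k ∈ Finset.range N, γ k ^ (r + 1) * (Cf ^ 2 + lam k ^ 2 * Ch ^ 2) +
              (m : ℝ) ^ 2 * Cf * ∑ k ∈ Finset.range N, γ k ^ (r + 1) * (Cf + lam k * Ch))
            + 2 * Mh * ∑ k ∈ Finset.range N, γ k ^ r * lam k := by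
          congr 1
          · congr 1
            rw [Finset.mul_sum, Finset.mul_sum, ← Finset.sum_add_distrib]
            exact Finset.sum_congr rfl fun k _ => by ring
          · rw [Finset.mul_sum]
            exact Finset.sum_congr rfl fun k _ => by ring
      _ ≤ Big := by rw [hBig]; linarith [habel]
  -- Jensen
  have hfconv : ConvexOn ℝ (Set.univ) f := by
    rw [hfdef]
    exact convexOn_finset_sum Finset.univ fi (fun i _ => hfi i) convex_univ
  have hw1 : ∑ k ∈ Finset.range N, γ k ^ r / S = 1 := by
    rw [← Finset.sum_div, ← hS, div_self hSpos.ne']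
  have hmean : f (∑ k ∈ Finset.range N, (γ k ^ r / S) • x k)
      ≤ ∑ k ∈ Finset.range N, (γ k ^ r / S) * f (x k) := by
    have := hfconv.map_sum_le (t := Finset.range N) (w := fun k => γ k ^ r / S) (p := x)
      (fun k _ => div_nonneg (Real.rpow_pos_of_pos (hγpos k) _).le hSpos.le) hw1 (fun k _ => Set.mem_univ _)
    simpa [smul_eq_mul] using this
  have hfinal : (∑ k ∈ Finset.range N, (γ k ^ r / S) * f (x k)) - fstar
      = S⁻¹ * ∑ k ∈ Finset.range N, γ k ^ r * (f (x k) - fstar) := by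
    symm
    calc S⁻¹ * ∑ k ∈ Finset.range N, γ k ^ r * (f (x k) - fstar)
        = ∑ k ∈ Finset.range N, ((γ k ^ r / S) * f (x k) - (γ k ^ r / S) * fstar) := by
          rw [Finset.mul_sum]
          exact Finset.sum_congr rfl fun k _ => by ring
      _ = (∑ k ∈ Finset.range N, (γ k ^ r / S) * f (x k))
            - (∑ k ∈ Finset.range N, γ k ^ r / S) * fstar := by
          rw [Finset.sum_sub_distrib, Finset.sum_mul]
      _ = (∑ k ∈ Finset.range N, (γ k ^ r / S) * f (x k)) - fstar := by rw [hw1, one_mul]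
  calc f (∑ k ∈ Finset.range N, (γ k ^ r / S) • x k) - fstar
      ≤ (∑ k ∈ Finset.range N, (γ k ^ r / S) * f (x k)) - fstar := by linarith [hmean]
    _ = S⁻¹ * ∑ k ∈ Finset.range N, γ k ^ r * (f (x k) - fstar) := hfinal
    _ ≤ S⁻¹ * Big := mul_le_mul_of_nonneg_left hsumall (inv_nonneg.mpr hSpos.le)
end
end

section
/- For $0 < ar$, $b > 0$ with $ar + b < 1$ and $ar < 1$, we have $\left(\sum_{k=0}^{N-1}(k+1)^{-ar}\right)^{-1}\left(\sum_{k=0}^{N-1}(k+1)^{-(ar+b)}\right) = \mathcal{O}(N^{-b}) + \mathcal{O}(N^{-(1-ar)})$ as $N \to \infty$. -/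
open Filter Finset Real Set
open scoped RealInnerProductSpace Topology BigOperators

noncomputable section

lemma upper_sum (p : ℝ) (hp0 : 0 < p) (hp1 : p < 1) (N : ℕ) (hN : 1 ≤ N) :
    (∑ k ∈ Finset.range N, ((k : ℝ) + 1) ^ (-p)) ≤ (1 + 1 / (1 - p)) * (N : ℝ) ^ (1 - p) := by
  obtain ⟨M, rfl⟩ := Nat.exists_eq_add_of_le hN
  have hanti : AntitoneOn (fun x : ℝ => x ^ (-p)) (Set.Icc 1 (1 + (M : ℝ))) := by
    intro x hx y hy hxy
    exact Real.rpow_le_rpow_of_nonpos (lt_of_lt_of_le one_pos hx.1) hxy (by linarith)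
  have hint := hanti.sum_le_integral
  rw [integral_rpow (Or.inl (by linarith)), Real.one_rpow] at hint
  rw [show 1 + M = M + 1 from Nat.add_comm 1 M, Finset.sum_range_succ']
  have hs : ∀ i ∈ Finset.range M, (((i+1 : ℕ):ℝ) + 1) ^ (-p) = (1 + ((i+1 : ℕ):ℝ)) ^ (-p) := by
    intro i _; rw [add_comm]
  rw [Finset.sum_congr rfl hs]
  have hcast : ((M + 1 : ℕ) : ℝ) = 1 + (M:ℝ) := by push_cast; ring
  rw [hcast]
  set X := (1 + (M:ℝ)) ^ (1 - p) with hX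
  have hX1 : 1 ≤ X := Real.one_le_rpow (by linarith [Nat.cast_nonneg (α := ℝ) M]) (by linarith)
  have h1p : 0 < 1 - p := by linarith
  have hrw : ((1 + (M:ℝ)) ^ (-p + 1) - 1) / (-p + 1) = (X - 1) / (1 - p) := by
    rw [hX]; ring_nf
  rw [hrw] at hint
  have : ((0:ℕ):ℝ) + 1 = 1 := by norm_num
  rw [this, Real.one_rpow]
  have hdiv : (X - 1) / (1 - p) + 1 ≤ (1 + 1 / (1 - p)) * X := by
    have h2 : (X - 1) / (1 - p) ≤ X / (1 - p) := by gcongr; linarith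
    have h3 : X / (1 - p) = (1 / (1 - p)) * X := by ring
    nlinarith [h2, hX1]
  calc ∑ i ∈ Finset.range M, (1 + ((i+1 : ℕ):ℝ)) ^ (-p) + 1 ≤ (X - 1) / (1 - p) + 1 := by linarith
    _ ≤ (1 + 1 / (1 - p)) * X := hdiv

lemma lower_sum (α : ℝ) (hα0 : 0 < α) (hα1 : α < 1) (N : ℕ) (hN : 1 ≤ N) :
    (N : ℝ) ^ (1 - α) ≤ ∑ k ∈ Finset.range N, ((k : ℝ) + 1) ^ (-α) := by
  have hN0 : (0:ℝ) < N := by exact_mod_cast hN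
  have hterm : ∀ k ∈ Finset.range N, (N:ℝ) ^ (-α) ≤ ((k:ℝ) + 1) ^ (-α) := by
    intro k hk
    have hk' : (k:ℝ) + 1 ≤ N := by
      have := Finset.mem_range.mp hk; exact_mod_cast Nat.succ_le_of_lt this
    exact Real.rpow_le_rpow_of_nonpos (by positivity) hk' (by linarith)
  calc (N:ℝ) ^ (1 - α) = N * (N:ℝ) ^ (-α) := by
        rw [show (1 - α) = 1 + (-α) by ring, Real.rpow_add hN0, Real.rpow_one]
    _ = ∑ _k ∈ Finset.range N, (N:ℝ) ^ (-α) := by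
        rw [Finset.sum_const, Finset.card_range, nsmul_eq_mul]
    _ ≤ _ := Finset.sum_le_sum hterm


/-- a second power-sum ratio estimate. -/
theorem ratio_estimate_two (a r b : ℝ) (h1 : 0 < a * r) (h2 : 0 < b)
    (h3 : a * r + b < 1) (h4 : a * r < 1) :
    ∃ C > 0, ∃ N0 : ℕ, ∀ N ≥ N0,
      (∑ k ∈ Finset.range N, ((k : ℝ) + 1) ^ (-(a * r)))⁻¹ *
          (∑ k ∈ Finset.range N, ((k : ℝ) + 1) ^ (-(a * r + b))) ≤
        C * ((N : ℝ) ^ (-b) + (N : ℝ) ^ (-(1 - a * r))) := by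
  set α := a * r
  have h1ab0 : 0 < 1 - (α + b) := by linarith
  refine ⟨1 + 1 / (1 - (α + b)), by positivity, 1, ?_⟩
  intro N hN
  set C := 1 + 1 / (1 - (α + b)) with hC
  have hN0 : (0:ℝ) < N := by exact_mod_cast hN
  have hlow := lower_sum α h1 h4 N hN
  have hup := upper_sum (α + b) (by linarith) h3 N hN
  have hS1pos : (0:ℝ) < ∑ k ∈ Finset.range N, ((k : ℝ) + 1) ^ (-α) :=
    lt_of_lt_of_le (by positivity) hlow
  have hinv : (∑ k ∈ Finset.range N, ((k : ℝ) + 1) ^ (-α))⁻¹ ≤ (N:ℝ) ^ (-(1 - α)) := by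
    rw [Real.rpow_neg hN0.le]
    exact inv_anti₀ (by positivity) hlow
  have hS2nonneg : (0:ℝ) ≤ ∑ k ∈ Finset.range N, ((k : ℝ) + 1) ^ (-(α + b)) := by
    positivity
  have h1ab : 0 < 1 - (α + b) := by linarith
  have hCpos : 0 < C := by positivity
  calc (∑ k ∈ Finset.range N, ((k : ℝ) + 1) ^ (-α))⁻¹ *
          (∑ k ∈ Finset.range N, ((k : ℝ) + 1) ^ (-(α + b)))
      ≤ (N:ℝ) ^ (-(1 - α)) * ((1 + 1 / (1 - (α + b))) * (N:ℝ) ^ (1 - (α + b))) := by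
        apply mul_le_mul hinv hup hS2nonneg (by positivity)
    _ = C * (N:ℝ) ^ (-b) := by
        rw [hC, mul_comm ((N:ℝ) ^ (-(1 - α))) _, mul_assoc, ← Real.rpow_add hN0]
        ring_nf
    _ ≤ C * ((N:ℝ) ^ (-b) + (N:ℝ) ^ (-(1 - α))) := by
        have : (0:ℝ) ≤ (N:ℝ) ^ (-(1 - α)) := by positivity
        nlinarith
end
end

section
/- Under Assumption 1, with $\gamma_k = \gamma_0/(k+1)^{0.5+0.5\epsilon}$ and $\lambda_k = \lambda_0/(k+1)^{0.5-\epsilon}$ for some $0 < \epsilon < 0.5$, $r < 1$, $\gamma_0\lambda_0\mu_h \leq 2m$, the averaged iterates $\bar{x}_N$ of the IR-IG algorithm satisfy $f(\bar{x}_N) - f^* = \mathcal{O}(N^{-(0.5-\epsilon)})$. -/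
open Filter Finset Real Set
open scoped RealInnerProductSpace Topology BigOperators

noncomputable section

lemma irig_proj_inner_le {n : ℕ} {X : Set (Euc n)} (hXcv : Convex ℝ X) {p y : Euc n}
    (hp : IsProjOn X p y) {z : Euc n} (hz : z ∈ X) : ⟪p - y, z - y⟫ ≤ 0 := by
  haveI : Nonempty ↥X := ⟨⟨y, hp.1⟩⟩
  have heq : ‖p - y‖ = ⨅ w : X, ‖p - w‖ := by
    refine le_antisymm (le_ciInf fun w => hp.2 w w.2) ?_
    exact ciInf_le ⟨0, by rintro b ⟨w, rfl⟩; positivity⟩ (⟨y, hp.1⟩ : X)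
  exact (norm_eq_iInf_iff_real_inner_le_zero hXcv hp.1).mp heq z hz

lemma irig_proj_sq_le {n : ℕ} {X : Set (Euc n)} (hXcv : Convex ℝ X) {p y : Euc n}
    (hp : IsProjOn X p y) {z : Euc n} (hz : z ∈ X) : ‖y - z‖ ^ 2 ≤ ‖p - z‖ ^ 2 := by
  have key := irig_proj_inner_le hXcv hp hz
  have hexp : ‖p - z‖ ^ 2 = ‖p - y‖ ^ 2 + 2 * ⟪p - y, y - z⟫ + ‖y - z‖ ^ 2 := by
    have := norm_add_sq_real (p - y) (y - z)
    rw [show p - y + (y - z) = p - z by abel] at this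
    linarith
  have h2 : ⟪p - y, y - z⟫ = -⟪p - y, z - y⟫ := by
    rw [show y - z = -(z - y) by abel, inner_neg_right]
  nlinarith [sq_nonneg ‖p - y‖]

lemma irig_sum_rpow_lb (q : ℝ) (N : ℕ) (hN : 1 ≤ N) :
    (2:ℝ)^(-|q|) / 2 * (N:ℝ)^(q+1) ≤ ∑ k ∈ Finset.range N, ((k:ℝ)+1)^q := by
  have hNpos : (0:ℝ) < N := by exact_mod_cast hN
  have hterm : ∀ k ∈ Finset.Ico (N/2) N, (2:ℝ)^(-|q|) * (N:ℝ)^q ≤ ((k:ℝ)+1)^q := by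
    intro k hk
    rw [Finset.mem_Ico] at hk
    have hk1 : (N:ℝ)/2 ≤ (k:ℝ)+1 := by
      have : N ≤ 2 * (k+1) := by omega
      have := (Nat.cast_le (α := ℝ)).2 this
      push_cast at this; linarith
    have hk2 : (k:ℝ)+1 ≤ N := by exact_mod_cast hk.2
    have hkpos : (0:ℝ) < (k:ℝ)+1 := by positivity
    rcases le_or_gt 0 q with hq | hq
    · rw [abs_of_nonneg hq]
      have : ((N:ℝ)/2)^q ≤ ((k:ℝ)+1)^q := Real.rpow_le_rpow (by positivity) hk1 hq
      rwa [Real.div_rpow (le_of_lt hNpos) (by norm_num), div_eq_mul_inv,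
        ← Real.rpow_neg (by norm_num), mul_comm] at this
    · rw [abs_of_neg hq, neg_neg]
      have h1 : (N:ℝ)^q ≤ ((k:ℝ)+1)^q := Real.rpow_le_rpow_of_nonpos hkpos hk2 (le_of_lt hq)
      have h2 : (2:ℝ)^q ≤ 1 := Real.rpow_le_one_of_one_le_of_nonpos (by norm_num) (le_of_lt hq)
      nlinarith [Real.rpow_nonneg (le_of_lt hNpos) q]
  have hsub : Finset.Ico (N/2) N ⊆ Finset.range N := by
    intro k hk; rw [Finset.mem_Ico] at hk; exact Finset.mem_range.2 hk.2
  have h1 : ∑ k ∈ Finset.Ico (N/2) N, ((k:ℝ)+1)^q ≤ ∑ k ∈ Finset.range N, ((k:ℝ)+1)^q :=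
    Finset.sum_le_sum_of_subset_of_nonneg hsub (fun k _ _ => by positivity)
  have h2 : ((N - N/2 : ℕ) : ℝ) * ((2:ℝ)^(-|q|) * (N:ℝ)^q)
      ≤ ∑ k ∈ Finset.Ico (N/2) N, ((k:ℝ)+1)^q := by
    have := Finset.card_nsmul_le_sum (Finset.Ico (N/2) N) _ _ hterm
    rwa [Nat.card_Ico, nsmul_eq_mul] at this
  have h3 : (N:ℝ)/2 ≤ ((N - N/2 : ℕ) : ℝ) := by
    have : N ≤ 2 * (N - N/2) := by omega
    have := (Nat.cast_le (α := ℝ)).2 this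
    push_cast at this; linarith
  have h4 : (0:ℝ) ≤ (2:ℝ)^(-|q|) * (N:ℝ)^q := by positivity
  have h5 : (N:ℝ)^(q+1) = (N:ℝ)^q * (N:ℝ) := Real.rpow_add_one (ne_of_gt hNpos) q
  have h6 := mul_le_mul_of_nonneg_right h3 h4
  have h7 : (2:ℝ)^(-|q|)/2 * ((N:ℝ)^q * (N:ℝ)) = (N:ℝ)/2 * ((2:ℝ)^(-|q|)*(N:ℝ)^q) := by ring
  rw [h5, h7]
  linarith

lemma irig_sum_rpow_ub_nonneg (q : ℝ) (hq : 0 ≤ q) (N : ℕ) (hN : 1 ≤ N) :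
    ∑ k ∈ Finset.range N, ((k:ℝ)+1)^q ≤ (N:ℝ)^(q+1) := by
  have hNpos : (0:ℝ) < N := by exact_mod_cast hN
  have : ∑ k ∈ Finset.range N, ((k:ℝ)+1)^q ≤ ∑ _k ∈ Finset.range N, (N:ℝ)^q := by
    refine Finset.sum_le_sum fun k hk => Real.rpow_le_rpow (by positivity) ?_ hq
    have := Finset.mem_range.1 hk
    exact_mod_cast Nat.succ_le_of_lt this
  rw [Finset.sum_const, Finset.card_range, nsmul_eq_mul] at this
  have h5 : (N:ℝ)^(q+1) = (N:ℝ)^q * (N:ℝ) := Real.rpow_add_one (ne_of_gt hNpos) q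
  rw [h5]; linarith

lemma irig_sum_rpow_ub_neg (s : ℝ) (hs1 : -1 < s) (hs0 : s < 0) (N : ℕ) (hN : 1 ≤ N) :
    ∑ k ∈ Finset.range N, ((k:ℝ)+1)^s ≤ 1 + (N:ℝ)^(s+1) / (s+1) := by
  have hs1' : (0:ℝ) < s + 1 := by linarith
  have hNpos : (0:ℝ) < N := by exact_mod_cast hN
  have hanti : AntitoneOn (fun x : ℝ => x ^ s) (Icc (1:ℝ) (1 + (N-1 : ℕ))) := by
    intro a ha b hb hab
    exact Real.rpow_le_rpow_of_nonpos (lt_of_lt_of_le one_pos ha.1) hab (le_of_lt hs0)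
  have key := hanti.sum_le_integral
  have hint : ∫ x in (1:ℝ)..(1 + (N-1:ℕ)), x ^ s
      = ((1 + (N-1:ℕ) : ℝ)^(s+1) - 1^(s+1)) / (s+1) := integral_rpow (Or.inl hs1)
  have hcast : (1 : ℝ) + ((N-1:ℕ) : ℝ) = N := by
    have : (N - 1 : ℕ) + 1 = N := by omega
    have := (Nat.cast_inj (R := ℝ)).2 this
    push_cast at this ⊢; linarith
  rw [hint, hcast] at key
  rw [Real.one_rpow] at key
  have hsum : ∑ k ∈ Finset.range N, ((k:ℝ)+1)^s
      = 1 + ∑ i ∈ Finset.range (N-1), ((1:ℝ) + ((i+1:ℕ):ℝ))^s := by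
    have hN' : N = (N-1) + 1 := by omega
    conv_lhs => rw [hN', Finset.sum_range_succ']
    rw [Nat.cast_zero, zero_add, Real.one_rpow, add_comm]
    congr 1
    refine Finset.sum_congr rfl fun i _ => ?_
    congr 1
    push_cast; ring
  rw [hsum]
  have hmono : ((N:ℝ)^(s+1) - 1)/(s+1) ≤ (N:ℝ)^(s+1)/(s+1) :=
    (div_le_div_iff_of_pos_right hs1').2 (by linarith)
  linarith

lemma irig_sum_rpow_ub (t : ℝ) (ht : -1 < t) :
    ∃ C > 0, ∀ N : ℕ, 1 ≤ N → ∑ k ∈ Finset.range N, ((k:ℝ)+1)^t ≤ C * (N:ℝ)^(t+1) := by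
  rcases le_or_gt 0 t with h | h
  · exact ⟨1, one_pos, fun N hN => by
      rw [one_mul]; exact irig_sum_rpow_ub_nonneg t h N hN⟩
  · have ht1 : (0:ℝ) < t + 1 := by linarith
    refine ⟨1 + 1/(t+1), by positivity, fun N hN => ?_⟩
    have h1 := irig_sum_rpow_ub_neg t ht h N hN
    have h2 : (1:ℝ) ≤ (N:ℝ)^(t+1) :=
      Real.one_le_rpow (by exact_mod_cast hN) (le_of_lt ht1)
    have h3 : (1+1/(t+1))*(N:ℝ)^(t+1) = (N:ℝ)^(t+1) + (N:ℝ)^(t+1)/(t+1) := by ring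
    linarith

lemma irig_abel_bound (c d : ℕ → ℝ) (D : ℝ) (hc : ∀ k, 0 ≤ c k) (hmono : ∀ k, c k ≤ c (k+1))
    (hd : ∀ k, 0 ≤ d k) (hD : ∀ k, d k ≤ D) :
    ∀ N : ℕ, 1 ≤ N → ∑ k ∈ Finset.range N, c k * (d k - d (k+1)) ≤ c (N-1) * D := by
  have key : ∀ N : ℕ, ∑ k ∈ Finset.range (N+1), c k * (d k - d (k+1)) ≤ c N * (D - d (N+1)) := by
    intro N
    induction N with
    | zero =>
      rw [Finset.sum_range_one]
      nlinarith [hc 0, hD 0, hd 1]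
    | succ N ih =>
      rw [Finset.sum_range_succ]
      have h1 : c N * (D - d (N+1)) ≤ c (N+1) * (D - d (N+1)) := by
        apply mul_le_mul_of_nonneg_right (hmono N)
        linarith [hD (N+1)]
      nlinarith [hc (N+1)]
  intro N hN
  have hN' : N = (N-1) + 1 := by omega
  rw [hN']
  have := key (N-1)
  have h2 : c (N-1) * (D - d (N-1+1)) ≤ c (N-1) * D := by
    nlinarith [hc (N-1), hd (N-1+1)]
  simp only [Nat.add_sub_cancel]
  linarith

lemma irig_convexOn_finset_sum {E : Type*} [AddCommGroup E] [Module ℝ E] {ι : Type*}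
    (t : Finset ι) (g : ι → E → ℝ) (hg : ∀ i ∈ t, ConvexOn ℝ Set.univ (g i)) :
    ConvexOn ℝ Set.univ (fun y => ∑ i ∈ t, g i y) := by
  classical
  induction t using Finset.induction with
  | empty => simpa using convexOn_const (0:ℝ) convex_univ
  | insert a s hnotmem ih =>
    have h1 : ConvexOn ℝ Set.univ (g a) := hg a (Finset.mem_insert_self a s)
    have h2 := ih (fun i hi => hg i (Finset.mem_insert_of_mem hi))
    have := h1.add h2
    have heq : (fun y => ∑ i ∈ insert a s, g i y) = (g a + fun y => ∑ i ∈ s, g i y) := by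
      funext y
      simp [Finset.sum_insert hnotmem]
    rw [heq]; exact this

set_option maxHeartbeats 2000000 in
/-- rate of convergence of IR-IG in terms of the lower level objective. -/
theorem irig_rate {n : ℕ} (X : Set (Euc n))
    (hXne : X.Nonempty) (hXcp : IsCompact X) (hXcv : Convex ℝ X)
    (m : ℕ) (hm : 1 ≤ m)
    (fi : Fin m → Euc n → ℝ) (hfi : ∀ i, ConvexOn ℝ Set.univ (fi i))
    (f : Euc n → ℝ) (hfdef : f = fun y => ∑ i, fi i y)
    (h : Euc n → ℝ) (μ : ℝ) (hμ : 0 < μ) (hh : StrongConvexOn Set.univ μ h)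
    (Cf Ch : ℝ)
    (gf : Fin m → Euc n → Euc n) (gh : Euc n → Euc n)
    (hgf : ∀ i, ∀ y ∈ X, IsSubgradAt (fi i) y (gf i y) ∧ ‖gf i y‖ ≤ Cf)
    (hgh : ∀ y ∈ X, IsSubgradAt h y (gh y) ∧ ‖gh y‖ ≤ Ch)
    (hCf : ∀ i, ∀ y ∈ X, ∀ g, IsSubgradAt (fi i) y g → ‖g‖ ≤ Cf)
    (hChb : ∀ y ∈ X, ∀ g, IsSubgradAt h y g → ‖g‖ ≤ Ch)
    (γ lam : ℕ → ℝ) (hγpos : ∀ k, 0 < γ k) (hlampos : ∀ k, 0 < lam k)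
    (x : ℕ → Euc n) (xi : ℕ → ℕ → Euc n)
    (hx0 : x 0 ∈ X) (hxi0 : ∀ k, xi k 0 = x k)
    (hrec : ∀ k, ∀ i (hi : i < m),
      IsProjOn X
        (xi k i - γ k • (gf ⟨i, hi⟩ (xi k i) + (lam k / (m : ℝ)) • gh (xi k i)))
        (xi k (i + 1)))
    (hnext : ∀ k, x (k + 1) = xi k m)
    (ε r γ0 lam0 : ℝ) (hε0 : 0 < ε) (hε1 : ε < 0.5) (hr : r < 1)
    (hγ0 : 0 < γ0) (hlam0 : 0 < lam0) (hinit : γ0 * lam0 * μ ≤ 2 * (m : ℝ))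
    (hγdef : ∀ k, γ k = γ0 / ((k : ℝ) + 1) ^ (0.5 + 0.5 * ε))
    (hlamdef : ∀ k, lam k = lam0 / ((k : ℝ) + 1) ^ (0.5 - ε))
    (fstar : ℝ) (xstar : Euc n) (hxstar : xstar ∈ X ∧ ∀ y ∈ X, f xstar ≤ f y)
    (hfstar : fstar = f xstar) :
    ∃ C > 0, ∃ N0 : ℕ, ∀ N ≥ N0,
      f (∑ k ∈ Finset.range N, (γ k ^ r / ∑ i ∈ Finset.range N, γ i ^ r) • x k) - fstar ≤
        C * (N : ℝ) ^ (-(0.5 - ε)) := by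
  -- setup
  obtain ⟨hzX, hzmin⟩ := hxstar
  obtain ⟨M, hM⟩ : ∃ M : ℝ, ∀ y ∈ X, ‖y‖ ≤ M := hXcp.isBounded.exists_norm_le
  have hM0 : 0 ≤ M := le_trans (norm_nonneg _) (hM xstar hzX)
  have hCf0 : 0 ≤ Cf := le_trans (norm_nonneg _) (hgf ⟨0, hm⟩ xstar hzX).2
  have hCh0 : 0 ≤ Ch := le_trans (norm_nonneg _) (hgh xstar hzX).2
  have hmR : (1:ℝ) ≤ m := by exact_mod_cast hm
  have hmR0 : (0:ℝ) < m := by linarith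
  obtain ⟨p, hpdef⟩ : ∃ p : ℝ, p = 0.5 + 0.5 * ε := ⟨_, rfl⟩
  obtain ⟨β, hβdef⟩ : ∃ β : ℝ, β = 0.5 - ε := ⟨_, rfl⟩
  have hp0 : 0 < p := by rw [hpdef]; norm_num; linarith
  have hβ0 : 0 < β := by rw [hβdef]; norm_num; linarith
  have hβp : β ≤ p := by rw [hβdef, hpdef]; linarith
  have hpβ1 : p + β ≤ 1 := by rw [hβdef, hpdef]; linarith
  obtain ⟨q, hqdef⟩ : ∃ q : ℝ, q = -(p * r) := ⟨_, rfl⟩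
  have hq : -p < q := by
    rw [hqdef]
    nlinarith
  -- step sizes
  have hbase : ∀ k : ℕ, (1:ℝ) ≤ (k:ℝ) + 1 := fun k => by linarith [Nat.cast_nonneg (α := ℝ) k]
  have hγval : ∀ k : ℕ, γ k = γ0 / ((k:ℝ)+1)^p := fun k => by rw [hγdef k, hpdef]
  have hlamval : ∀ k : ℕ, lam k = lam0 / ((k:ℝ)+1)^β := fun k => by rw [hlamdef k, hβdef]
  have hγle : ∀ k, γ k ≤ γ0 := by
    intro k
    rw [hγval k]
    exact div_le_self (le_of_lt hγ0) (Real.one_le_rpow (hbase k) (le_of_lt hp0))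
  have hlamle : ∀ k, lam k ≤ lam0 := by
    intro k
    rw [hlamval k]
    exact div_le_self (le_of_lt hlam0) (Real.one_le_rpow (hbase k) (le_of_lt hβ0))
  have hγmono : ∀ k, γ (k+1) ≤ γ k := by
    intro k
    rw [hγval k, hγval (k+1)]
    apply div_le_div_of_nonneg_left (le_of_lt hγ0) (by positivity)
    apply Real.rpow_le_rpow (by positivity) (by push_cast; linarith) (le_of_lt hp0)
  -- membership
  have hxX : ∀ k, x k ∈ X := by
    intro k
    induction k with
    | zero => exact hx0
    | succ k _ =>
      rw [hnext k]
      have : m = (m - 1) + 1 := by omega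
      rw [this]
      exact (hrec k (m-1) (by omega)).1
  have hxiX : ∀ k i, i ≤ m → xi k i ∈ X := by
    intro k i hi
    match i with
    | 0 => rw [hxi0]; exact hxX k
    | (j+1) => exact (hrec k j (by omega)).1
  -- basic bounds
  obtain ⟨G, hGdef⟩ : ∃ G : ℝ, G = Cf + lam0 * Ch := ⟨_, rfl⟩
  have hG0 : 0 ≤ G := by rw [hGdef]; positivity
  have hdiam : ∀ y ∈ X, ∀ w ∈ X, ‖y - w‖ ≤ 2 * M := by
    intro y hy w hw
    calc ‖y - w‖ ≤ ‖y‖ + ‖w‖ := norm_sub_le y w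
    _ ≤ 2 * M := by linarith [hM y hy, hM w hw]
  have hdnorm : ∀ k i (hi : i < m),
      ‖gf ⟨i, hi⟩ (xi k i) + (lam k / (m:ℝ)) • gh (xi k i)‖ ≤ G := by
    intro k i hi
    have hyX : xi k i ∈ X := hxiX k i (le_of_lt hi)
    have h1 : ‖gf ⟨i, hi⟩ (xi k i)‖ ≤ Cf := (hgf ⟨i, hi⟩ _ hyX).2
    have h2 : ‖(lam k / (m:ℝ)) • gh (xi k i)‖ ≤ lam0 * Ch := by
      rw [norm_smul, Real.norm_eq_abs, abs_of_nonneg (le_of_lt (div_pos (hlampos k) hmR0))]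
      have h3 : lam k / (m:ℝ) ≤ lam0 := by
        calc lam k / (m:ℝ) ≤ lam k / 1 := by
              apply div_le_div_of_nonneg_left (le_of_lt (hlampos k)) one_pos hmR
        _ = lam k := div_one _
        _ ≤ lam0 := hlamle k
      exact mul_le_mul h3 ((hgh _ hyX).2) (norm_nonneg _) (le_of_lt hlam0)
    calc ‖_ + _‖ ≤ _ := norm_add_le _ _
    _ ≤ G := by rw [hGdef]; linarith
  -- Lipschitz-type bound for fi on X
  have hlip : ∀ (i : Fin m), ∀ y ∈ X, ∀ w ∈ X, fi i y - fi i w ≤ Cf * ‖w - y‖ := by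
    intro i y hy w hw
    have hs := (hgf i y hy).1 w
    have h1 := abs_real_inner_le_norm (gf i y) (w - y)
    have h2 : ‖gf i y‖ * ‖w - y‖ ≤ Cf * ‖w - y‖ :=
      mul_le_mul_of_nonneg_right (hgf i y hy).2 (norm_nonneg _)
    have h3 := neg_abs_le (⟪gf i y, w - y⟫)
    linarith
  -- displacement of inner steps
  have hdisp : ∀ k i (hi : i < m), ‖xi k (i+1) - xi k i‖ ≤ 2 * γ k * G := by
    intro k i hi
    obtain ⟨d, hd⟩ : ∃ d, d = gf ⟨i, hi⟩ (xi k i) + (lam k / (m:ℝ)) • gh (xi k i) := ⟨_, rfl⟩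
    have hproj := hrec k i hi
    rw [← hd] at hproj
    have h1 : ‖(xi k i - γ k • d) - xi k i‖ = γ k * ‖d‖ := by
      rw [show (xi k i - γ k • d) - xi k i = -(γ k • d) by abel, norm_neg, norm_smul,
        Real.norm_eq_abs, abs_of_pos (hγpos k)]
    have h2 : ‖(xi k i - γ k • d) - xi k (i+1)‖ ≤ γ k * ‖d‖ := by
      rw [← h1]; exact hproj.2 (xi k i) (hxiX k i (le_of_lt hi))
    have h3 : ‖d‖ ≤ G := by rw [hd]; exact hdnorm k i hi
    have h4 := norm_add_le (xi k (i+1) - (xi k i - γ k • d)) ((xi k i - γ k • d) - xi k i)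
    rw [show xi k (i+1) - (xi k i - γ k • d) + ((xi k i - γ k • d) - xi k i)
        = xi k (i+1) - xi k i by abel] at h4
    rw [norm_sub_rev (xi k (i+1)) ((xi k i - γ k • d))] at h4
    have h5 : γ k * ‖d‖ ≤ γ k * G := mul_le_mul_of_nonneg_left h3 (le_of_lt (hγpos k))
    linarith
  have h2γG : ∀ k, (0:ℝ) ≤ 2 * γ k * G :=
    fun k => mul_nonneg (mul_nonneg (by norm_num) (le_of_lt (hγpos k))) hG0
  -- drift from x k
  have hdrift : ∀ k i, i ≤ m → ‖xi k i - x k‖ ≤ 2 * γ k * G * i := by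
    intro k i
    induction i with
    | zero => intro _; rw [hxi0]; simp
    | succ i ih =>
      intro hi1
      have h1 := ih (by omega)
      have h2 := hdisp k i (by omega)
      have h3 := norm_add_le (xi k (i+1) - xi k i) (xi k i - x k)
      rw [show xi k (i+1) - xi k i + (xi k i - x k) = xi k (i+1) - x k by abel] at h3
      push_cast
      have h4 := h2γG k
      nlinarith
  -- main per-step inequality
  have hstep : ∀ k i (hi : i < m),
      ‖xi k (i+1) - xstar‖^2 ≤ ‖xi k i - xstar‖^2
        - 2 * γ k * (fi ⟨i, hi⟩ (x k) - fi ⟨i, hi⟩ xstar)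
        + (4 * γ k^2 * G * (m:ℝ) * Cf + γ k^2 * G^2 + 4 * γ k * lam k * Ch * M / (m:ℝ)) := by
    intro k i hi
    obtain ⟨y, hy⟩ : ∃ y, y = xi k i := ⟨_, rfl⟩
    obtain ⟨d, hd⟩ : ∃ d, d = gf ⟨i, hi⟩ y + (lam k / (m:ℝ)) • gh y := ⟨_, rfl⟩
    rw [← hy]
    have hyX : y ∈ X := by rw [hy]; exact hxiX k i (le_of_lt hi)
    have hproj := hrec k i hi
    rw [← hy, ← hd] at hproj
    have h1 : ‖xi k (i+1) - xstar‖^2 ≤ ‖(y - γ k • d) - xstar‖^2 :=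
      irig_proj_sq_le hXcv hproj hzX
    have hexp : ‖(y - γ k • d) - xstar‖^2
        = ‖y - xstar‖^2 - 2 * γ k * ⟪d, y - xstar⟫ + γ k^2 * ‖d‖^2 := by
      rw [show (y - γ k • d) - xstar = (y - xstar) - γ k • d by abel, norm_sub_sq_real,
        real_inner_smul_right, norm_smul, Real.norm_eq_abs, real_inner_comm, mul_pow, sq_abs]
      ring
    have hnd : ‖d‖ ≤ G := by rw [hd, hy]; exact hdnorm k i hi
    have hnd2 : γ k^2 * ‖d‖^2 ≤ γ k^2 * G^2 :=
      mul_le_mul_of_nonneg_left (pow_le_pow_left₀ (norm_nonneg _) hnd 2) (sq_nonneg _)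
    have hA : fi ⟨i, hi⟩ y - fi ⟨i, hi⟩ xstar ≤ ⟪gf ⟨i, hi⟩ y, y - xstar⟫ := by
      have hs := (hgf ⟨i, hi⟩ y hyX).1 xstar
      have he : (⟪gf ⟨i, hi⟩ y, xstar - y⟫ : ℝ) = -⟪gf ⟨i, hi⟩ y, y - xstar⟫ := by
        rw [show xstar - y = -(y - xstar) by abel, inner_neg_right]
      linarith
    have hB : fi ⟨i, hi⟩ (x k) - fi ⟨i, hi⟩ y ≤ Cf * (2 * γ k * G * (m:ℝ)) := by
      have hl := hlip ⟨i, hi⟩ (x k) (hxX k) y hyX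
      have hdr := hdrift k i (le_of_lt hi)
      rw [← hy] at hdr
      have him : ((i:ℕ):ℝ) ≤ (m:ℝ) := by exact_mod_cast le_of_lt hi
      have h5' : 2*γ k*G*((i:ℕ):ℝ) ≤ 2*γ k*G*(m:ℝ) := mul_le_mul_of_nonneg_left him (h2γG k)
      have h5 : ‖y - x k‖ ≤ 2 * γ k * G * (m:ℝ) := le_trans hdr h5'
      have h6 : Cf * ‖y - x k‖ ≤ Cf * (2 * γ k * G * (m:ℝ)) :=
        mul_le_mul_of_nonneg_left h5 hCf0
      linarith
    have hC : h y - h xstar ≤ ⟪gh y, y - xstar⟫ := by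
      have hs := (hgh y hyX).1 xstar
      have he : (⟪gh y, xstar - y⟫ : ℝ) = -⟪gh y, y - xstar⟫ := by
        rw [show xstar - y = -(y - xstar) by abel, inner_neg_right]
      linarith
    have hD2 : -(2 * Ch * M) ≤ h y - h xstar := by
      have hs := (hgh xstar hzX).1 y
      have hcs := abs_real_inner_le_norm (gh xstar) (y - xstar)
      have h7 : ‖gh xstar‖ * ‖y - xstar‖ ≤ Ch * (2*M) :=
        mul_le_mul (hgh xstar hzX).2 (hdiam y hyX xstar hzX) (norm_nonneg _) hCh0
      have h8 := neg_abs_le (⟪gh xstar, y - xstar⟫)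
      linarith
    have hinner : (⟪d, y - xstar⟫ : ℝ)
        = ⟪gf ⟨i, hi⟩ y, y - xstar⟫ + (lam k/(m:ℝ)) * ⟪gh y, y - xstar⟫ := by
      rw [hd, inner_add_left, real_inner_smul_left]
    have hlm : 0 ≤ lam k / (m:ℝ) := le_of_lt (div_pos (hlampos k) hmR0)
    have hlow : fi ⟨i, hi⟩ (x k) - fi ⟨i, hi⟩ xstar - Cf * (2*γ k*G*(m:ℝ))
        - (lam k/(m:ℝ)) * (2*Ch*M) ≤ ⟪d, y - xstar⟫ := by
      have h8 : (lam k/(m:ℝ)) * (-(2*Ch*M)) ≤ (lam k/(m:ℝ)) * ⟪gh y, y - xstar⟫ :=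
        mul_le_mul_of_nonneg_left (by linarith) hlm
      rw [hinner]
      nlinarith
    have h2γ : (0:ℝ) ≤ 2 * γ k := by linarith [hγpos k]
    have h9 := mul_le_mul_of_nonneg_left hlow h2γ
    have hmm : (m:ℝ) ≠ 0 := ne_of_gt hmR0
    have hexpand : 2 * γ k * (fi ⟨i, hi⟩ (x k) - fi ⟨i, hi⟩ xstar - Cf * (2*γ k*G*(m:ℝ))
        - (lam k/(m:ℝ)) * (2*Ch*M))
        = 2 * γ k * (fi ⟨i, hi⟩ (x k) - fi ⟨i, hi⟩ xstar)
          - 4 * γ k^2 * G * (m:ℝ) * Cf - 4 * γ k * lam k * Ch * M / (m:ℝ) := by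
      field_simp
      ring
    rw [hexpand] at h9
    linarith
  -- telescoping over the inner loop
  have hmm : (m:ℝ) ≠ 0 := ne_of_gt hmR0
  obtain ⟨F, hF⟩ : ∃ F : ℕ → ℕ → ℝ,
      F = fun k i => if hi : i < m then fi ⟨i, hi⟩ (x k) - fi ⟨i, hi⟩ xstar else 0 := ⟨_, rfl⟩
  have hFval : ∀ k i (hi : i < m), F k i = fi ⟨i, hi⟩ (x k) - fi ⟨i, hi⟩ xstar := by
    intro k i hi; rw [hF]; simp only [hi, dif_pos]
  obtain ⟨E, hE⟩ : ∃ E : ℕ → ℝ,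
      E = fun k => 4 * γ k^2 * G * (m:ℝ) * Cf + γ k^2 * G^2 + 4 * γ k * lam k * Ch * M / (m:ℝ)
    := ⟨_, rfl⟩
  have htele : ∀ k j, j ≤ m → ‖xi k j - xstar‖^2
      ≤ ‖x k - xstar‖^2 - 2 * γ k * (∑ i ∈ Finset.range j, F k i) + (j:ℝ) * E k := by
    intro k j
    induction j with
    | zero => intro _; rw [hxi0]; simp
    | succ j ih =>
      intro hj
      have hjm : j < m := by omega
      have h1 := ih (by omega)
      have h2 := hstep k j hjm
      have h3 : 4 * γ k^2 * G * (m:ℝ) * Cf + γ k^2 * G^2 + 4 * γ k * lam k * Ch * M / (m:ℝ)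
          = E k := by rw [hE]
      rw [Finset.sum_range_succ, hFval k j hjm]
      push_cast
      rw [h3] at h2
      nlinarith [h2, h1]
  have hkey : ∀ k, 2 * γ k * (f (x k) - fstar)
      ≤ ‖x k - xstar‖^2 - ‖x (k+1) - xstar‖^2
        + (4*G*(m:ℝ)^2*Cf + (m:ℝ)*G^2) * γ k^2 + (4*Ch*M) * (γ k * lam k) := by
    intro k
    have h1 := htele k m le_rfl
    have hsumF : ∑ i ∈ Finset.range m, F k i = f (x k) - f xstar := by
      have e1 : ∑ i ∈ Finset.range m, F k i = ∑ i : Fin m, (fi i (x k) - fi i xstar) := by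
        rw [← Fin.sum_univ_eq_sum_range (fun i => F k i) m]
        refine Finset.sum_congr rfl fun i _ => ?_
        rw [hFval k i i.isLt]
      rw [e1, Finset.sum_sub_distrib, hfdef]
    rw [hsumF] at h1
    simp only [hE] at h1
    rw [hnext k, hfstar]
    have hexpand : (m:ℝ) * (4 * γ k^2 * G * (m:ℝ) * Cf + γ k^2 * G^2
        + 4 * γ k * lam k * Ch * M / (m:ℝ))
        = (4*G*(m:ℝ)^2*Cf + (m:ℝ)*G^2) * γ k^2 + (4*Ch*M) * (γ k * lam k) := by
      field_simp
    rw [hexpand] at h1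
    linarith
  -- abbreviations for the recursion constants
  obtain ⟨A, hAdef⟩ : ∃ A:ℝ, A = 4*G*(m:ℝ)^2*Cf + (m:ℝ)*G^2 := ⟨_, rfl⟩
  obtain ⟨B, hBdef⟩ : ∃ B:ℝ, B = 4*Ch*M := ⟨_, rfl⟩
  have hA0 : 0 ≤ A := by rw [hAdef]; positivity
  have hB0 : 0 ≤ B := by rw [hBdef]; positivity
  obtain ⟨a, hadef⟩ : ∃ a : ℕ → ℝ, a = fun k => f (x k) - fstar := ⟨_, rfl⟩
  have ha0 : ∀ k, 0 ≤ a k := by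
    intro k; rw [hadef]; simp only
    have := hzmin (x k) (hxX k)
    rw [hfstar]; linarith
  obtain ⟨dd, hdddef⟩ : ∃ dd : ℕ → ℝ, dd = fun k => ‖x k - xstar‖^2 := ⟨_, rfl⟩
  have hdd0 : ∀ k, 0 ≤ dd k := by intro k; rw [hdddef]; positivity
  have hddD : ∀ k, dd k ≤ (2*M)^2 := by
    intro k; rw [hdddef]; simp only
    have h1 := hdiam (x k) (hxX k) xstar hzX
    have h2 : (0:ℝ) ≤ ‖x k - xstar‖ := norm_nonneg _
    nlinarith
  obtain ⟨c, hcdef⟩ : ∃ c : ℕ → ℝ, c = fun k => γ k ^ (r-1) := ⟨_, rfl⟩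
  have hc0 : ∀ k, 0 ≤ c k := by
    intro k; rw [hcdef]
    exact le_of_lt (Real.rpow_pos_of_pos (hγpos k) _)
  have hcmono : ∀ k, c k ≤ c (k+1) := by
    intro k; rw [hcdef]; simp only
    exact Real.rpow_le_rpow_of_nonpos (hγpos (k+1)) (hγmono k) (by linarith)
  have hsplit : ∀ k, γ k ^ r = c k * γ k := by
    intro k
    have h1 : γ k ^ (r - 1 + 1) = γ k ^ (r-1) * γ k :=
      Real.rpow_add_one (hγpos k).ne' (r-1)
    have h2 : r - 1 + 1 = r := by ring
    rw [h2] at h1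
    rw [hcdef]; exact h1
  -- pointwise weighted inequality
  have hpt : ∀ k, γ k ^ r * a k
      ≤ (1/2) * (c k * (dd k - dd (k+1)) + c k * (A * γ k^2 + B * (γ k * lam k))) := by
    intro k
    have h1 := hkey k
    rw [← hAdef, ← hBdef] at h1
    have h2 : 2 * γ k * a k ≤ dd k - dd (k+1) + A * γ k^2 + B * (γ k * lam k) := by
      rw [hadef, hdddef]; simp only
      linarith
    have h3 := mul_le_mul_of_nonneg_left h2 (hc0 k)
    rw [hsplit k]
    nlinarith
  -- the γ^r values as powers of (k+1)
  have hγpow : ∀ (s : ℝ) (k : ℕ), γ k ^ s = γ0^s * ((k:ℝ)+1)^(-(p*s)) := by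
    intro s k
    have hb0 : (0:ℝ) ≤ (k:ℝ)+1 := by positivity
    rw [hγval k, Real.div_rpow (le_of_lt hγ0) (Real.rpow_nonneg hb0 _),
      ← Real.rpow_mul hb0, div_eq_mul_inv, ← Real.rpow_neg hb0]
  have hγr : ∀ k, γ k ^ r = γ0^r * ((k:ℝ)+1)^q := by
    intro k; rw [hγpow r k, hqdef]
  have hγkb : ∀ k, γ k ≤ γ0 * ((k:ℝ)+1)^(-β) := by
    intro k
    have h1 : ((k:ℝ)+1)^β ≤ ((k:ℝ)+1)^p := Real.rpow_le_rpow_of_exponent_le (hbase k) hβp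
    have h2 : γ0 / ((k:ℝ)+1)^p ≤ γ0 / ((k:ℝ)+1)^β :=
      div_le_div_of_nonneg_left (le_of_lt hγ0) (Real.rpow_pos_of_pos (by positivity) _) h1
    have h3 : γ0 / ((k:ℝ)+1)^β = γ0 * ((k:ℝ)+1)^(-β) := by
      rw [div_eq_mul_inv, ← Real.rpow_neg (by positivity)]
    rw [hγval k, ← h3]
    exact h2
  have hlamb : ∀ k, lam k = lam0 * ((k:ℝ)+1)^(-β) := by
    intro k; rw [hlamval k, div_eq_mul_inv, ← Real.rpow_neg (by positivity)]
  obtain ⟨K, hKdef⟩ : ∃ K:ℝ, K = γ0^r * (A*γ0 + B*lam0) := ⟨_, rfl⟩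
  have hK0 : 0 ≤ K := by
    rw [hKdef]
    exact mul_nonneg (le_of_lt (Real.rpow_pos_of_pos hγ0 r))
      (add_nonneg (mul_nonneg hA0 (le_of_lt hγ0)) (mul_nonneg hB0 (le_of_lt hlam0)))
  have hterm2 : ∀ k, c k * (A * γ k^2 + B * (γ k * lam k)) ≤ K * ((k:ℝ)+1)^(q-β) := by
    intro k
    have hfact : c k * (A * γ k^2 + B * (γ k * lam k)) = (γ k ^ r) * (A * γ k + B * lam k) := by
      rw [hsplit k]; ring
    have hb0 : (0:ℝ) ≤ (k:ℝ)+1 := by positivity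
    have h1 : A * γ k + B * lam k ≤ (A*γ0 + B*lam0) * ((k:ℝ)+1)^(-β) := by
      have h4 := mul_le_mul_of_nonneg_left (hγkb k) hA0
      have h5 : B * lam k = B * (lam0 * ((k:ℝ)+1)^(-β)) := by rw [hlamb k]
      nlinarith [Real.rpow_nonneg hb0 (-β)]
    have h6 : (γ k ^ r) * (A * γ k + B * lam k)
        ≤ (γ0^r * ((k:ℝ)+1)^q) * ((A*γ0 + B*lam0) * ((k:ℝ)+1)^(-β)) := by
      rw [← hγr k]
      apply mul_le_mul_of_nonneg_left h1 (le_of_lt (Real.rpow_pos_of_pos (hγpos k) r))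
    have h7 : (γ0^r * ((k:ℝ)+1)^q) * ((A*γ0 + B*lam0) * ((k:ℝ)+1)^(-β))
        = K * ((k:ℝ)+1)^(q-β) := by
      rw [hKdef, show q - β = q + -β by ring, Real.rpow_add (by positivity)]
      ring
    rw [hfact]
    rw [h7] at h6
    exact h6
  -- weighted sum bound
  have hsumbound : ∀ N, 1 ≤ N → ∑ k ∈ Finset.range N, γ k ^ r * a k
      ≤ (1/2) * (γ0^(r-1) * (N:ℝ)^(q+p) * (2*M)^2
          + K * (∑ k ∈ Finset.range N, ((k:ℝ)+1)^(q-β))) := by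
    intro N hN
    have h1 : ∑ k ∈ Finset.range N, γ k^r * a k
        ≤ (1/2) * (∑ k ∈ Finset.range N, c k * (dd k - dd (k+1))
            + ∑ k ∈ Finset.range N, c k * (A*γ k^2 + B*(γ k*lam k))) := by
      calc ∑ k ∈ Finset.range N, γ k^r * a k
          ≤ ∑ k ∈ Finset.range N, (1/2) * (c k * (dd k - dd (k+1))
              + c k * (A*γ k^2 + B*(γ k*lam k))) := Finset.sum_le_sum (fun k _ => hpt k)
        _ = (1/2) * ∑ k ∈ Finset.range N, (c k * (dd k - dd (k+1))
              + c k * (A*γ k^2 + B*(γ k*lam k))) := (Finset.mul_sum _ _ _).symm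
        _ = _ := by rw [Finset.sum_add_distrib]
    have h2 := irig_abel_bound c dd ((2*M)^2) hc0 hcmono hdd0 hddD N hN
    have h3 : c (N-1) = γ0^(r-1) * (N:ℝ)^(q+p) := by
      rw [hcdef]; simp only
      rw [hγpow (r-1) (N-1)]
      have e1 : ((N-1:ℕ):ℝ) + 1 = (N:ℝ) := by
        have e2 : (N-1) + 1 = N := by omega
        calc ((N-1:ℕ):ℝ) + 1 = (((N-1) + 1 : ℕ):ℝ) := by push_cast; ring
        _ = (N:ℝ) := by rw [e2]
      rw [e1]
      congr 1
      rw [hqdef]; ring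
    have h4 : ∑ k ∈ Finset.range N, c k*(A*γ k^2+B*(γ k*lam k))
        ≤ K * ∑ k ∈ Finset.range N, ((k:ℝ)+1)^(q-β) := by
      rw [Finset.mul_sum]; exact Finset.sum_le_sum (fun k _ => hterm2 k)
    rw [h3] at h2
    linarith
  -- convexity of f
  have hconv : ConvexOn ℝ Set.univ f := by
    rw [hfdef]
    exact irig_convexOn_finset_sum Finset.univ fi (fun i _ => hfi i)
  have hqβ : -1 < q - β := by linarith [hq, hpβ1]
  obtain ⟨C1, hC1pos, hC1⟩ := irig_sum_rpow_ub (q-β) hqβ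
  obtain ⟨cq, hcqpos, hcqdef⟩ : ∃ cq:ℝ, 0 < cq ∧ cq = (2:ℝ)^(-|q|)/2 :=
    ⟨_, by positivity, rfl⟩
  obtain ⟨C2, hC2def⟩ : ∃ C2:ℝ, C2 = (1/2)*(γ0^(r-1)*(2*M)^2 + K*C1) := ⟨_, rfl⟩
  have hγr1pos : (0:ℝ) < γ0^(r-1) := Real.rpow_pos_of_pos hγ0 (r-1)
  have hγrpos : (0:ℝ) < γ0^r := Real.rpow_pos_of_pos hγ0 r
  have hC20 : 0 ≤ C2 := by
    have e1 := mul_nonneg (le_of_lt hγr1pos) (sq_nonneg (2*M))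
    have e2 := mul_nonneg hK0 (le_of_lt hC1pos)
    rw [hC2def]
    linarith
  have hden : (0:ℝ) < γ0^r * cq := mul_pos hγrpos hcqpos
  refine ⟨C2/(γ0^r*cq) + 1,
    add_pos_of_nonneg_of_pos (div_nonneg hC20 (le_of_lt hden)) one_pos, 1, ?_⟩
  intro N hN
  have hNR : (1:ℝ) ≤ (N:ℝ) := by exact_mod_cast hN
  have hNpos : (0:ℝ) < (N:ℝ) := lt_of_lt_of_le one_pos hNR
  have hSformula : ∑ i ∈ Finset.range N, γ i ^ r
      = γ0^r * ∑ k ∈ Finset.range N, ((k:ℝ)+1)^q := by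
    rw [Finset.mul_sum]; exact Finset.sum_congr rfl (fun k _ => hγr k)
  have hSlb : γ0^r * (cq * (N:ℝ)^(q+1)) ≤ ∑ i ∈ Finset.range N, γ i ^ r := by
    rw [hSformula]
    refine mul_le_mul_of_nonneg_left ?_ (le_of_lt hγrpos)
    rw [hcqdef]
    exact irig_sum_rpow_lb q N hN
  have hSpos : (0:ℝ) < ∑ i ∈ Finset.range N, γ i ^ r :=
    lt_of_lt_of_le (mul_pos hγrpos (mul_pos hcqpos (Real.rpow_pos_of_pos hNpos _))) hSlb
  -- Jensen
  have hw0 : ∀ k ∈ Finset.range N, 0 ≤ γ k ^ r / (∑ i ∈ Finset.range N, γ i ^ r) :=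
    fun k _ => div_nonneg (le_of_lt (Real.rpow_pos_of_pos (hγpos k) r)) (le_of_lt hSpos)
  have hw1 : ∑ k ∈ Finset.range N, γ k ^ r / (∑ i ∈ Finset.range N, γ i ^ r) = 1 := by
    rw [← Finset.sum_div]; exact div_self (ne_of_gt hSpos)
  have hjen := hconv.map_sum_le hw0 hw1 (fun k _ => Set.mem_univ (x k))
  -- rewrite the averaged bound
  have hchain : f (∑ k ∈ Finset.range N, (γ k ^ r / ∑ i ∈ Finset.range N, γ i ^ r) • x k) - fstar
      ≤ (∑ k ∈ Finset.range N, γ k^r * a k) / (∑ i ∈ Finset.range N, γ i ^ r) := by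
    have e2 : ∑ k ∈ Finset.range N, γ k^r * a k
        = ∑ k ∈ Finset.range N, γ k^r * f (x k)
          - (∑ i ∈ Finset.range N, γ i ^ r) * fstar := by
      rw [hadef]
      simp only [mul_sub]
      rw [Finset.sum_sub_distrib, ← Finset.sum_mul]
    have e3 : ∑ k ∈ Finset.range N, (γ k ^ r / (∑ i ∈ Finset.range N, γ i ^ r)) * f (x k)
        = (∑ k ∈ Finset.range N, γ k^r * f (x k)) / (∑ i ∈ Finset.range N, γ i ^ r) := by
      rw [Finset.sum_div]
      exact Finset.sum_congr rfl (fun k _ => div_mul_eq_mul_div _ _ _)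
    have e4 : (∑ k ∈ Finset.range N, γ k^r * a k) / (∑ i ∈ Finset.range N, γ i ^ r)
        = (∑ k ∈ Finset.range N, γ k^r * f (x k)) / (∑ i ∈ Finset.range N, γ i ^ r) - fstar := by
      rw [e2, sub_div, mul_comm, mul_div_assoc, div_self (ne_of_gt hSpos), mul_one]
    rw [e4, ← e3]
    have hjen' : f (∑ k ∈ Finset.range N, (γ k ^ r / ∑ i ∈ Finset.range N, γ i ^ r) • x k)
        ≤ ∑ k ∈ Finset.range N, (γ k ^ r / (∑ i ∈ Finset.range N, γ i ^ r)) * f (x k) := hjen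
    linarith [hjen']
  -- final estimates
  have hnum := hsumbound N hN
  have hup1 : (N:ℝ)^(q+p) ≤ (N:ℝ)^(q-β+1) :=
    Real.rpow_le_rpow_of_exponent_le hNR (by linarith)
  have hnum2 : ∑ k ∈ Finset.range N, γ k^r * a k ≤ C2 * (N:ℝ)^(q-β+1) := by
    have h5 := hC1 N hN
    have h7 : γ0^(r-1) * (N:ℝ)^(q+p) ≤ γ0^(r-1) * (N:ℝ)^(q-β+1) :=
      mul_le_mul_of_nonneg_left hup1 (le_of_lt hγr1pos)
    have h6 : γ0^(r-1) * (N:ℝ)^(q+p) * (2*M)^2 ≤ γ0^(r-1) * (N:ℝ)^(q-β+1) * (2*M)^2 :=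
      mul_le_mul_of_nonneg_right h7 (sq_nonneg (2*M))
    have h8 := mul_le_mul_of_nonneg_left h5 hK0
    calc ∑ k ∈ Finset.range N, γ k^r * a k
        ≤ (1/2) * (γ0^(r-1) * (N:ℝ)^(q+p) * (2*M)^2
            + K * (∑ k ∈ Finset.range N, ((k:ℝ)+1)^(q-β))) := hnum
      _ ≤ (1/2) * (γ0^(r-1) * (N:ℝ)^(q-β+1) * (2*M)^2 + K * (C1 * (N:ℝ)^(q-β+1))) := by
          linarith
      _ = ((1/2)*(γ0^(r-1)*(2*M)^2 + K*C1)) * (N:ℝ)^(q-β+1) := by ring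
      _ = C2 * (N:ℝ)^(q-β+1) := by rw [hC2def]
  have hsplitN : (N:ℝ)^(q-β+1) = (N:ℝ)^(q+1) * (N:ℝ)^(-β) := by
    rw [← Real.rpow_add hNpos]; ring_nf
  have hNq1 : (0:ℝ) < (N:ℝ)^(q+1) := Real.rpow_pos_of_pos hNpos _
  have hNβ : (0:ℝ) ≤ (N:ℝ)^(-β) := le_of_lt (Real.rpow_pos_of_pos hNpos _)
  have h9 : (∑ k ∈ Finset.range N, γ k^r * a k) / (∑ i ∈ Finset.range N, γ i ^ r)
      ≤ (C2 * (N:ℝ)^(q-β+1)) / (γ0^r * (cq * (N:ℝ)^(q+1))) :=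
    div_le_div₀ (mul_nonneg hC20 (le_of_lt (Real.rpow_pos_of_pos hNpos _))) hnum2
      (mul_pos hγrpos (mul_pos hcqpos hNq1)) hSlb
  have h10 : (C2 * (N:ℝ)^(q-β+1)) / (γ0^r * (cq * (N:ℝ)^(q+1)))
      = (C2/(γ0^r*cq)) * (N:ℝ)^(-β) := by
    rw [hsplitN]
    field_simp
  have h11 : (C2/(γ0^r*cq)) * (N:ℝ)^(-β) ≤ (C2/(γ0^r*cq) + 1) * (N:ℝ)^(-β) :=
    mul_le_mul_of_nonneg_right (by linarith) hNβ
  have hgoalβ : ((N:ℝ) : ℝ)^(-(0.5 - ε)) = (N:ℝ)^(-β) := by rw [hβdef]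
  rw [hgoalβ]
  rw [h10] at h9
  linarith [hchain]
end
end
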